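/- arXiv:1211.4953 — 5 statements merged into one kernel-verified Lean document; each statement's English description precedes it below -/
import Mathlib

section
/- Let f, g : X → (-∞, +∞] be proper lower semicontinuous convex functions on a real Banach space X with dom f ∩ dom g ≠ ∅. Then for every x ∈ X and every ε ≥ 0, the ε-subdifferential of f + g at x equals the intersection over all η > 0 of the weak* closures of the unions, over ε₁, ε₂ ≥ 0 with ε₁ + ε₂ = ε + η, of ∂_{ε₁}f(x) + ∂_{ε₂}g(x). -/
open Pointwise Topology Set

noncomputable section

variable {X : Type*} [NormedAddCommGroup X] [NormedSpace ℝ X]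

/-- `f` is proper: never `-∞` and finite somewhere. -/
def EProper (f : X → EReal) : Prop := (∀ x, f x ≠ ⊥) ∧ ∃ x, f x ≠ ⊤

/-- effective domain of `f`. -/
def edom (f : X → EReal) : Set X := {x | f x < ⊤}

/-- convexity for extended-real-valued functions. -/
def EConvex (f : X → EReal) : Prop :=
  ∀ x y : X, ∀ t : ℝ, 0 ≤ t → t ≤ 1 →
    f (t • x + (1 - t) • y) ≤ (t : EReal) * f x + ((1 - t : ℝ) : EReal) * f y

/-- the ε-subdifferential of `f` at `x`, a subset of the weak* dual. -/
def epsSubdiff (f : X → EReal) (ε : ℝ) (x : X) : Set (WeakDual ℝ X) :=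
  {p | f x ≠ ⊤ ∧ f x ≠ ⊥ ∧ ∀ y : X, (p (y - x) : EReal) + f x ≤ f y + (ε : EReal)}

/-- the (exact) subdifferential of `f` at `x`. -/
def subdiff (f : X → EReal) (x : X) : Set (WeakDual ℝ X) := epsSubdiff f 0 x

/-- the Fenchel conjugate of `f`. -/
def fconj (f : X → EReal) (p : WeakDual ℝ X) : EReal := ⨆ x : X, (p x : EReal) - f x

/-- the infimal convolution of finitely many functions on the dual. -/
def infConv {m : ℕ} (g : Fin m → WeakDual ℝ X → EReal) (p : WeakDual ℝ X) : EReal :=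
  ⨅ (y : Fin m → WeakDual ℝ X) (_ : ∑ i, y i = p), ∑ i, g i (y i)

/-- exactness (attainment) of the infimal convolution at `p`. -/
def infConvExactAt {m : ℕ} (g : Fin m → WeakDual ℝ X → EReal) (p : WeakDual ℝ X) : Prop :=
  ∃ y : Fin m → WeakDual ℝ X, ∑ i, y i = p ∧ infConv g p = ∑ i, g i (y i)

/-- the epigraph of the Fenchel conjugate of `f`, in `X* × ℝ`. -/
def epiConj (f : X → EReal) : Set ((WeakDual ℝ X) × ℝ) :=
  {q | fconj f q.1 ≤ (q.2 : EReal)}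


/-- reinterpret a continuous linear functional as an element of the weak dual. -/
def toWeak (p : X →L[ℝ] ℝ) : WeakDual ℝ X := p

lemma toWeak_apply (p : X →L[ℝ] ℝ) (y : X) : toWeak p y = p y := rfl

/-- evaluation at `x` as a linear functional on the weak dual. -/
def evalLM (x : X) : WeakDual ℝ X →ₗ[ℝ] ℝ where
  toFun q := q x
  map_add' a b := rfl
  map_smul' c a := rfl

lemma exists_eval_rep (φ : WeakDual ℝ X →L[ℝ] ℝ) : ∃ w : X, ∀ q : WeakDual ℝ X, φ q = q w := by
  have hb := LinearMap.hasBasis_weakBilin (topDualPairing ℝ X)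
  have h0 : φ ⁻¹' (Metric.ball (0:ℝ) 1) ∈ 𝓝 (0 : WeakDual ℝ X) := by
    apply φ.continuous.continuousAt.preimage_mem_nhds
    rw [φ.map_zero]
    exact Metric.ball_mem_nhds _ one_pos
  rcases hb.mem_iff.1 h0 with ⟨U, hU, hUsub⟩
  rcases (SeminormFamily.basisSets_iff _).1 hU with ⟨s, r, hr, rfl⟩
  have hker : ∀ q : WeakDual ℝ X, (∀ i ∈ s, q i = 0) → φ q = 0 := by
    intro q hq
    by_contra hne
    have hmem : ∀ c : ℝ, (c • q) ∈ Seminorm.ball (s.sup ((topDualPairing ℝ X).toSeminormFamily)) 0 r := by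
      intro c
      refine (Seminorm.mem_ball_zero _).2 ?_
      apply Seminorm.finset_sup_apply_lt hr
      intro i hi
      show ‖c • (q i)‖ < r
      rw [hq i hi, smul_zero, norm_zero]
      exact hr
    have habs : ∀ c : ℝ, |φ (c • q)| < 1 := by
      intro c
      have : φ (c • q) ∈ Metric.ball (0:ℝ) 1 := hUsub (hmem c)
      simpa [Real.dist_eq, abs_mul, map_smul] using this
    have : |φ ((2 / |φ q|) • q)| = 2 := by
      rw [map_smul, smul_eq_mul, abs_mul, abs_div]
      rw [abs_abs, abs_two, div_mul_cancel₀]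
      exact abs_ne_zero.2 hne
    have h2 := habs (2 / |φ q|)
    rw [this] at h2
    linarith
  -- span argument
  have hker' : (⨅ i : {i // i ∈ s}, LinearMap.ker (evalLM (i : X))) ≤ LinearMap.ker (φ : WeakDual ℝ X →ₗ[ℝ] ℝ) := by
    intro q hq
    simp only [Submodule.mem_iInf, LinearMap.mem_ker] at hq ⊢
    exact hker q (fun i hi => hq ⟨i, hi⟩)
  have hspan := mem_span_of_iInf_ker_le_ker hker'
  rcases (Submodule.mem_span_range_iff_exists_fun ℝ).1 hspan with ⟨c, hc⟩
  refine ⟨∑ i : {i // i ∈ s}, c i • (i : X), fun q => ?_⟩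
  have := congrArg (fun L : WeakDual ℝ X →ₗ[ℝ] ℝ => L q) hc
  simp only [LinearMap.coe_sum, Finset.sum_apply, LinearMap.smul_apply] at this
  rw [show φ q = ((φ : WeakDual ℝ X →ₗ[ℝ] ℝ) q) from rfl, ← this]
  rw [map_sum]
  congr 1
  ext i
  rw [map_smul]
  rfl

lemma er_sub_le_iff {a b : ℝ} {c : EReal} :
    (a:EReal) - c ≤ (b:EReal) ↔ ((a-b:ℝ):EReal) ≤ c := by
  induction c using EReal.rec with
  | bot => simp [EReal.sub_bot]; exact EReal.coe_ne_bot _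
  | coe x =>
    rw [← EReal.coe_sub, EReal.coe_le_coe_iff, EReal.coe_le_coe_iff]
    constructor <;> intro h <;> linarith
  | top => simp [EReal.sub_top]

lemma er_le_add_iff {a b : ℝ} {c : EReal} :
    (a:EReal) ≤ c + (b:EReal) ↔ ((a-b:ℝ):EReal) ≤ c := by
  induction c using EReal.rec with
  | bot => simp [EReal.bot_add]; exact EReal.coe_ne_bot _
  | coe x =>
    rw [← EReal.coe_add, EReal.coe_le_coe_iff, EReal.coe_le_coe_iff]
    constructor <;> intro h <;> linarith
  | top => simp [EReal.top_add_coe]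

lemma fconj_le_coe_iff {f : X → EReal} {q : WeakDual ℝ X} {s : ℝ} :
    fconj f q ≤ (s:EReal) ↔ ∀ y, ((q y - s:ℝ):EReal) ≤ f y := by
  rw [fconj, iSup_le_iff]
  exact forall_congr' fun y => er_sub_le_iff

lemma coe_le_fconj {f : X → EReal} {q : WeakDual ℝ X} {y : X} :
    (q y : EReal) - f y ≤ fconj f q := le_iSup (fun x => (q x : EReal) - f x) y

/-- if `f y` is finite real `v`, `fconj f q ≤ s` gives a real inequality. -/
lemma fconj_le_real {f : X → EReal} {q : WeakDual ℝ X} {s : ℝ} (h : fconj f q ≤ (s:EReal))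
    {y : X} {v : ℝ} (hv : f y = (v:EReal)) : q y - s ≤ v := by
  have := (fconj_le_coe_iff.1 h) y
  rw [hv, EReal.coe_le_coe_iff] at this
  exact this

lemma sep_epi {f : X → EReal} (hf : EProper f) (hfl : LowerSemicontinuous f) (hfc : EConvex f)
    {z : X} {t : ℝ} (ht : (t:EReal) < f z) :
    ∃ (p₀ : X →L[ℝ] ℝ) (c u : ℝ), 0 ≤ c ∧ p₀ z + c * t < u ∧
      ∀ y : X, ∀ s : ℝ, f y ≤ (s:EReal) → u < p₀ y + c * s := by
  obtain ⟨x₀, hx₀⟩ := hf.2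
  obtain ⟨v₀, hv₀⟩ : ∃ v₀ : ℝ, f x₀ = (v₀:EReal) := by
    cases hfx : f x₀ with
    | bot => exact absurd hfx (hf.1 x₀)
    | coe v => exact ⟨v, rfl⟩
    | top => exact absurd hfx hx₀
  set E := {q : X × ℝ | f q.1 ≤ (q.2:EReal)} with hE
  have hEc : IsClosed E := by
    have h1 : IsClosed {q : X × EReal | f q.1 ≤ q.2} := hfl.isClosed_epigraph
    exact h1.preimage (continuous_fst.prodMk (continuous_coe_real_ereal.comp continuous_snd))
  have hEconv : Convex ℝ E := by
    rintro ⟨x₁, r₁⟩ h₁ ⟨x₂, r₂⟩ h₂ a b ha hb hab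
    simp only [hE, Set.mem_setOf_eq] at h₁ h₂ ⊢
    obtain ⟨v₁, hv₁⟩ : ∃ v₁ : ℝ, f x₁ = (v₁:EReal) := by
      cases hfx : f x₁ with
      | bot => exact absurd hfx (hf.1 x₁)
      | coe v => exact ⟨v, rfl⟩
      | top => rw [hfx] at h₁; exact absurd h₁ (by simp)
    obtain ⟨v₂, hv₂⟩ : ∃ v₂ : ℝ, f x₂ = (v₂:EReal) := by
      cases hfx : f x₂ with
      | bot => exact absurd hfx (hf.1 x₂)
      | coe v => exact ⟨v, rfl⟩
      | top => rw [hfx] at h₂; exact absurd h₂ (by simp)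
    rw [hv₁, EReal.coe_le_coe_iff] at h₁
    rw [hv₂, EReal.coe_le_coe_iff] at h₂
    have hcvx := hfc x₁ x₂ a ha (by linarith)
    have hb' : (1 - a) = b := by linarith
    rw [hb'] at hcvx
    refine le_trans hcvx ?_
    rw [hv₁, hv₂, ← EReal.coe_mul, ← EReal.coe_mul, ← EReal.coe_add, EReal.coe_le_coe_iff]
    show a * v₁ + b * v₂ ≤ a • r₁ + b • r₂
    have := mul_le_mul_of_nonneg_left h₁ ha
    have := mul_le_mul_of_nonneg_left h₂ hb
    simp only [smul_eq_mul]
    linarith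
  have hz : (z, t) ∉ E := by
    simp only [hE, Set.mem_setOf_eq, not_le]
    exact ht
  obtain ⟨Φ, u, hΦ1, hΦ2⟩ := geometric_hahn_banach_point_closed hEconv hEc hz
  set p₀ := Φ.comp (ContinuousLinearMap.inl ℝ X ℝ) with hp₀
  set c := Φ (0, 1) with hc
  have hsplit : ∀ y : X, ∀ s : ℝ, Φ (y, s) = p₀ y + c * s := by
    intro y s
    have : (y, s) = (y, (0:ℝ)) + s • ((0:X), (1:ℝ)) := by
      simp [Prod.ext_iff]
    rw [this, map_add, map_smul]
    simp [hp₀, smul_eq_mul]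
    ring
  have hsep : ∀ y : X, ∀ s : ℝ, f y ≤ (s:EReal) → u < p₀ y + c * s := by
    intro y s hy
    rw [← hsplit]
    exact hΦ2 (y, s) hy
  have hcnn : 0 ≤ c := by
    by_contra hneg
    push_neg at hneg
    obtain ⟨n, hn⟩ := exists_nat_gt ((p₀ x₀ + c * v₀ - u) / (-c))
    have h1 := hsep x₀ (v₀ + n) (by rw [hv₀]; exact_mod_cast le_add_of_nonneg_right (by positivity))
    have h2 : (p₀ x₀ + c * v₀ - u) < n * (-c) := by
      rw [div_lt_iff₀ (by linarith)] at hn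
      linarith
    nlinarith
  refine ⟨p₀, c, u, hcnn, ?_, hsep⟩
  rw [← hsplit]
  exact hΦ1

lemma extract_conj {f : X → EReal} (hfb : ∀ x, f x ≠ ⊥) {p₀ : X →L[ℝ] ℝ} {c u : ℝ} (hc : 0 < c)
    (h : ∀ y : X, ∀ s : ℝ, f y ≤ (s:EReal) → u < p₀ y + c * s) :
    fconj f (toWeak ((-(c⁻¹)) • p₀)) ≤ ((-(u/c) : ℝ) : EReal) := by
  rw [fconj_le_coe_iff]
  intro y
  cases hfy : f y with
  | bot => exact absurd hfy (hfb y)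
  | top => simp
  | coe v =>
    rw [EReal.coe_le_coe_iff]
    have := h y v (le_of_eq hfy)
    have hq : toWeak ((-(c⁻¹)) • p₀) y = -(c⁻¹) * p₀ y := rfl
    rw [hq]
    have hc' : c ≠ 0 := ne_of_gt hc
    rw [neg_mul, sub_neg_eq_add, ← sub_nonneg]
    have key : v - (-(c⁻¹ * p₀ y) + u / c) = (p₀ y + c * v - u) / c := by field_simp; ring
    rw [key]
    apply div_nonneg (by linarith) (le_of_lt hc)

lemma ereal_is_real {a : EReal} (h1 : a ≠ ⊥) (h2 : a ≠ ⊤) : ∃ v : ℝ, a = (v:EReal) :=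
  ⟨a.toReal, (EReal.coe_toReal h2 h1).symm⟩

lemma exists_fconj_le {f : X → EReal} (hf : EProper f) (hfl : LowerSemicontinuous f)
    (hfc : EConvex f) : ∃ (q : WeakDual ℝ X) (s : ℝ), fconj f q ≤ (s:EReal) := by
  obtain ⟨x₀, hx₀⟩ := hf.2
  obtain ⟨v₀, hv₀⟩ := ereal_is_real (hf.1 x₀) hx₀
  obtain ⟨p₀, c, u, hcnn, hlt, hsep⟩ := sep_epi hf hfl hfc (z := x₀) (t := v₀ - 1)
    (by rw [hv₀]; exact_mod_cast (by linarith : v₀ - 1 < v₀))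
  have hcpos : 0 < c := by
    rcases eq_or_lt_of_le hcnn with hc0 | hcpos
    · exfalso
      have h1 := hsep x₀ v₀ (le_of_eq hv₀)
      rw [← hc0] at hlt h1
      simp at hlt h1
      linarith
    · exact hcpos
  exact ⟨_, _, extract_conj hf.1 hcpos hsep⟩

lemma key_biconj {f : X → EReal} (hf : EProper f) (hfl : LowerSemicontinuous f)
    (hfc : EConvex f) {z : X} {t : ℝ} (ht : (t:EReal) < f z) :
    ∃ (q : WeakDual ℝ X) (s : ℝ), fconj f q ≤ (s:EReal) ∧ t < q z - s := by
  obtain ⟨p₀, c, u, hcnn, hlt, hsep⟩ := sep_epi hf hfl hfc ht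
  rcases eq_or_lt_of_le hcnn with hc0 | hcpos
  · -- separating functional is horizontal
    obtain ⟨qb, sb, hqb⟩ := exists_fconj_le hf hfl hfc
    have hz : p₀ z < u := by rw [← hc0] at hlt; simpa using hlt
    set lam : ℝ := max 1 ((t - (qb z - sb) + 1) / (u - p₀ z)) with hlam
    have hlampos : (0:ℝ) < lam := lt_of_lt_of_le one_pos (le_max_left _ _)
    have happ : ∀ y : X, (qb + lam • (toWeak (-p₀))) y = qb y - lam * p₀ y := by
      intro y
      show qb y + lam * ((-p₀) y) = _
      simp
      ring
    refine ⟨qb + lam • (toWeak (-p₀)), sb - lam * u, ?_, ?_⟩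
    · rw [fconj_le_coe_iff]
      intro y
      cases hfy : f y with
      | bot => exact absurd hfy (hf.1 y)
      | top => simp
      | coe v =>
        rw [EReal.coe_le_coe_iff]
        have h1 : qb y - sb ≤ v := fconj_le_real hqb hfy
        have h2 : u < p₀ y := by
          have := hsep y v (le_of_eq hfy)
          rw [← hc0] at this
          simpa using this
        rw [happ y]
        nlinarith
    · rw [happ z]
      have hge : lam ≥ (t - (qb z - sb) + 1) / (u - p₀ z) := le_max_right _ _
      rw [ge_iff_le, div_le_iff₀ (by linarith)] at hge
      nlinarith
  · -- c > 0
    refine ⟨toWeak ((-(c⁻¹)) • p₀), -(u/c), extract_conj hf.1 hcpos hsep, ?_⟩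
    have happ : toWeak ((-(c⁻¹)) • p₀) z = -(c⁻¹) * p₀ z := rfl
    rw [happ]
    have hc' : c ≠ 0 := ne_of_gt hcpos
    rw [← sub_pos]
    have key : -(c⁻¹) * p₀ z - -(u/c) - t = (u - (p₀ z + c * t)) / c := by field_simp; ring
    rw [key]
    exact div_pos (by linarith) hcpos

instance : LocallyConvexSpace ℝ (WeakDual ℝ X) :=
  WeakBilin.locallyConvexSpace (B := topDualPairing ℝ X)

lemma exists_real_lt {a : EReal} (h : a ≠ ⊥) : ∃ t : ℝ, (t:EReal) < a := by
  cases ha : a with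
  | bot => exact absurd ha h
  | top => exact ⟨0, by simp⟩
  | coe v => exact ⟨v - 1, by exact_mod_cast (by linarith : v - 1 < v)⟩

lemma epiConj_convex {f : X → EReal} (hfb : ∀ x, f x ≠ ⊥) : Convex ℝ (epiConj f) := by
  rintro ⟨q₁, s₁⟩ h₁ ⟨q₂, s₂⟩ h₂ a b ha hb hab
  simp only [epiConj, Set.mem_setOf_eq] at h₁ h₂ ⊢
  show fconj f (a • q₁ + b • q₂) ≤ ((a • s₁ + b • s₂ : ℝ) : EReal)
  rw [fconj_le_coe_iff]
  intro y
  cases hfy : f y with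
  | bot => exact absurd hfy (hfb y)
  | top => simp
  | coe v =>
    rw [EReal.coe_le_coe_iff]
    have e1 : q₁ y - s₁ ≤ v := fconj_le_real h₁ hfy
    have e2 : q₂ y - s₂ ≤ v := fconj_le_real h₂ hfy
    have happ : (a • q₁ + b • q₂) y = a * q₁ y + b * q₂ y := rfl
    rw [happ]
    have := mul_le_mul_of_nonneg_left e1 ha
    have h3 := mul_le_mul_of_nonneg_left e2 hb
    have h4 := mul_le_mul_of_nonneg_left e1 ha
    have hv : a * v + b * v = v := by rw [← add_mul, hab, one_mul]
    simp only [smul_eq_mul]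
    linarith

lemma epiConj_add_subset {f g : X → EReal} (hf : EProper f) (hg : EProper g)
    (hfl : LowerSemicontinuous f) (hgl : LowerSemicontinuous g)
    (hfc : EConvex f) (hgc : EConvex g)
    {x₀ : X} (hx₀f : f x₀ ≠ ⊤) (hx₀g : g x₀ ≠ ⊤) :
    epiConj (fun y => f y + g y) ⊆ closure (epiConj f + epiConj g) := by
  obtain ⟨a₀, ha₀⟩ := ereal_is_real (hf.1 x₀) hx₀f
  obtain ⟨b₀, hb₀⟩ := ereal_is_real (hg.1 x₀) hx₀g
  rintro ⟨p, r⟩ hpr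
  simp only [epiConj, Set.mem_setOf_eq] at hpr
  by_contra hnot
  set K : Set (WeakDual ℝ X × ℝ) := epiConj f + epiConj g with hKdef
  have hKconv : Convex ℝ (closure K) := ((epiConj_convex hf.1).add (epiConj_convex hg.1)).closure
  obtain ⟨Φ, u₀, hΦ1, hΦ2⟩ := geometric_hahn_banach_point_closed hKconv isClosed_closure hnot
  obtain ⟨w, hw⟩ := exists_eval_rep (Φ.comp (ContinuousLinearMap.inl ℝ _ ℝ))
  set c := Φ (0, 1) with hcdef
  have hsplit : ∀ (q : WeakDual ℝ X) (s : ℝ), Φ (q, s) = q w + c * s := by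
    intro q s
    have hdec : (q, s) = ((q, (0:ℝ)) : WeakDual ℝ X × ℝ) + s • (0, (1:ℝ)) := by
      simp [Prod.ext_iff]
    rw [hdec, map_add, map_smul, smul_eq_mul]
    have : Φ (q, (0:ℝ)) = q w := by
      rw [← hw q]; rfl
    rw [this]
    ring
  have hK : ∀ (q₁ : WeakDual ℝ X) (s₁ : ℝ) (q₂ : WeakDual ℝ X) (s₂ : ℝ),
      fconj f q₁ ≤ (s₁:EReal) → fconj g q₂ ≤ (s₂:EReal) →
      u₀ < (q₁ + q₂) w + c * (s₁ + s₂) := by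
    intro q₁ s₁ q₂ s₂ h1 h2
    have hmem : ((q₁ + q₂, s₁ + s₂) : WeakDual ℝ X × ℝ) ∈ K := by
      have h1' : ((q₁, s₁) : WeakDual ℝ X × ℝ) ∈ epiConj f := h1
      have h2' : ((q₂, s₂) : WeakDual ℝ X × ℝ) ∈ epiConj g := h2
      have := Set.add_mem_add h1' h2'
      simpa [Prod.mk_add_mk] using this
    have := hΦ2 _ (subset_closure hmem)
    rwa [hsplit] at this
  have hΦ1' : p w + c * r < u₀ := by rw [← hsplit]; exact hΦ1
  obtain ⟨qf, sf, hqf⟩ := exists_fconj_le hf hfl hfc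
  obtain ⟨qg, sg, hqg⟩ := exists_fconj_le hg hgl hgc
  have hcnn : 0 ≤ c := by
    by_contra hneg
    push_neg at hneg
    obtain ⟨n, hn⟩ := exists_nat_gt (((qf + qg) w + c * (sf + sg) - u₀) / (-c))
    have h1 := hK qf (sf + n) qg sg
      (le_trans hqf (by exact_mod_cast le_add_of_nonneg_right (by positivity : (0:ℝ) ≤ (n:ℝ)))) hqg
    have h2 : ((qf + qg) w + c * (sf + sg) - u₀) < n * (-c) := by
      rw [div_lt_iff₀ (by linarith)] at hn
      linarith
    nlinarith
  rcases eq_or_lt_of_le hcnn with hc0 | hcpos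
  · -- c = 0 case
    have hK0 : ∀ (q₁ : WeakDual ℝ X) (s₁ : ℝ) (q₂ : WeakDual ℝ X) (s₂ : ℝ),
        fconj f q₁ ≤ (s₁:EReal) → fconj g q₂ ≤ (s₂:EReal) → u₀ < q₁ w + q₂ w := by
      intro q₁ s₁ q₂ s₂ h1 h2
      have := hK q₁ s₁ q₂ s₂ h1 h2
      rw [← hc0] at this
      have happ : (q₁ + q₂) w = q₁ w + q₂ w := rfl
      rw [happ] at this
      linarith
    have hpw : p w < u₀ := by rw [← hc0] at hΦ1'; linarith
    set M : ℝ := a₀ + b₀ with hM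
    set lam : ℝ := max 1 ((r - p x₀ + M + 1) / (u₀ - p w)) with hlamd
    have hlampos : (0:ℝ) < lam := lt_of_lt_of_le one_pos (le_max_left _ _)
    set z : X := x₀ - lam • w with hz
    have claim1 : ∀ t₁ t₂ : ℝ, (t₁:EReal) < f z → (t₂:EReal) < g z → t₁ + t₂ < M - lam * u₀ := by
      intro t₁ t₂ ht₁ ht₂
      obtain ⟨q₁, s₁, hc₁, hv₁⟩ := key_biconj hf hfl hfc ht₁
      obtain ⟨q₂, s₂, hc₂, hv₂⟩ := key_biconj hg hgl hgc ht₂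
      have hy₁ : q₁ x₀ - s₁ ≤ a₀ := fconj_le_real hc₁ ha₀
      have hy₂ : q₂ x₀ - s₂ ≤ b₀ := fconj_le_real hc₂ hb₀
      have hzq₁ : q₁ z = q₁ x₀ - lam * q₁ w := by
        rw [hz, map_sub, map_smul, smul_eq_mul]
      have hzq₂ : q₂ z = q₂ x₀ - lam * q₂ w := by
        rw [hz, map_sub, map_smul, smul_eq_mul]
      have hu := hK0 q₁ s₁ q₂ s₂ hc₁ hc₂
      rw [hzq₁] at hv₁
      rw [hzq₂] at hv₂
      nlinarith
    have hfz : f z ≠ ⊤ := by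
      intro htop
      obtain ⟨t₂, ht₂⟩ := exists_real_lt (hg.1 z)
      have := claim1 (M - lam * u₀ - t₂ + 1) t₂ (by rw [htop]; exact EReal.coe_lt_top _) ht₂
      linarith
    have hgz : g z ≠ ⊤ := by
      intro htop
      obtain ⟨t₁, ht₁⟩ := exists_real_lt (hf.1 z)
      have := claim1 t₁ (M - lam * u₀ - t₁ + 1) ht₁ (by rw [htop]; exact EReal.coe_lt_top _)
      linarith
    obtain ⟨A, hA⟩ := ereal_is_real (hf.1 z) hfz
    obtain ⟨B, hB⟩ := ereal_is_real (hg.1 z) hgz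
    have hAB : A + B ≤ M - lam * u₀ := by
      by_contra hlt
      push_neg at hlt
      set d : ℝ := (A + B - (M - lam * u₀)) / 2 with hd
      have hdpos : 0 < d := by rw [hd]; linarith
      have := claim1 (A - d) (B - d)
        (by rw [hA]; exact_mod_cast (by linarith : A - d < A))
        (by rw [hB]; exact_mod_cast (by linarith : B - d < B))
      rw [hd] at this
      linarith
    have hval := (fconj_le_coe_iff.1 hpr) z
    rw [hA, hB, ← EReal.coe_add, EReal.coe_le_coe_iff] at hval
    have hpz : p z = p x₀ - lam * p w := by rw [hz, map_sub, map_smul, smul_eq_mul]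
    have hlamge : (r - p x₀ + M + 1) / (u₀ - p w) ≤ lam := le_max_right _ _
    rw [div_le_iff₀ (by linarith)] at hlamge
    nlinarith
  · -- c > 0 case
    set z : X := (-(c⁻¹)) • w with hz
    have hwz : ∀ q : WeakDual ℝ X, q w = -c * q z := by
      intro q
      rw [hz, map_smul, smul_eq_mul]
      field_simp
    have hchoice : ∃ t₁ t₂ : ℝ, (t₁:EReal) < f z ∧ (t₂:EReal) < g z ∧ -(c * t₁) - c * t₂ ≤ u₀ := by
      have hc' : c ≠ 0 := ne_of_gt hcpos
      by_cases hfz : f z = ⊤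
      · obtain ⟨t₂, ht₂⟩ := exists_real_lt (hg.1 z)
        refine ⟨(-u₀ - c * t₂) / c, t₂, by rw [hfz]; exact EReal.coe_lt_top _, ht₂, ?_⟩
        rw [← sub_nonneg]
        have : u₀ - (-(c * ((-u₀ - c * t₂) / c)) - c * t₂) = 0 := by field_simp; ring
        rw [this]
      · by_cases hgz : g z = ⊤
        · obtain ⟨t₁, ht₁⟩ := exists_real_lt (hf.1 z)
          refine ⟨t₁, (-u₀ - c * t₁) / c, ht₁, by rw [hgz]; exact EReal.coe_lt_top _, ?_⟩
          rw [← sub_nonneg]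
          have : u₀ - (-(c * t₁) - c * ((-u₀ - c * t₁) / c)) = 0 := by field_simp; ring
          rw [this]
        · obtain ⟨A, hA⟩ := ereal_is_real (hf.1 z) hfz
          obtain ⟨B, hB⟩ := ereal_is_real (hg.1 z) hgz
          have hval := (fconj_le_coe_iff.1 hpr) z
          rw [hA, hB, ← EReal.coe_add, EReal.coe_le_coe_iff] at hval
          have hpw : p w = -c * p z := hwz p
          have hpos : 0 < u₀ + c * (A + B) := by nlinarith
          set d : ℝ := (u₀ + c * (A + B)) / (2 * c) with hd
          have hdpos : 0 < d := div_pos hpos (by linarith)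
          refine ⟨A - d, B - d,
            by rw [hA]; exact_mod_cast (by linarith : A - d < A),
            by rw [hB]; exact_mod_cast (by linarith : B - d < B), ?_⟩
          have : -(c * (A - d)) - c * (B - d) = -c * (A + B) + 2 * c * d := by ring
          rw [this, hd]
          have h2 : 2 * c * ((u₀ + c * (A + B)) / (2 * c)) = u₀ + c * (A + B) := by
            field_simp
          rw [h2]
          linarith
    obtain ⟨t₁, t₂, ht₁, ht₂, hsum⟩ := hchoice
    obtain ⟨q₁, s₁, hc₁, hv₁⟩ := key_biconj hf hfl hfc ht₁
    obtain ⟨q₂, s₂, hc₂, hv₂⟩ := key_biconj hg hgl hgc ht₂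
    have hu := hK q₁ s₁ q₂ s₂ hc₁ hc₂
    have happ : (q₁ + q₂) w = q₁ w + q₂ w := rfl
    rw [happ, hwz q₁, hwz q₂] at hu
    nlinarith

lemma epsSubdiff_mono {f : X → EReal} {x : X} {ε ε' : ℝ} (h : ε ≤ ε') :
    epsSubdiff f ε x ⊆ epsSubdiff f ε' x := by
  rintro q ⟨h1, h2, h3⟩
  exact ⟨h1, h2, fun y => le_trans (h3 y) (add_le_add_right (EReal.coe_le_coe_iff.2 h) _)⟩

lemma mem_epsSubdiff_of_fconj {f : X → EReal} {q : WeakDual ℝ X} {s : ℝ} {x : X} {a : ℝ}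
    (ha : f x = (a:EReal)) (h : fconj f q ≤ (s:EReal)) :
    q ∈ epsSubdiff f (s + a - q x) x := by
  refine ⟨by rw [ha]; exact EReal.coe_ne_top a, by rw [ha]; exact EReal.coe_ne_bot a, fun y => ?_⟩
  have h2 := fconj_le_coe_iff.1 h y
  have e1 : (q (y - x) : EReal) + f x = ((q y - q x + a : ℝ) : EReal) := by
    rw [show q (y - x) = q y - q x from map_sub q y x, ha, ← EReal.coe_add]
  rw [e1, er_le_add_iff]
  have e2 : (q y - q x + a - (s + a - q x) : ℝ) = q y - s := by ring
  rw [e2]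
  exact h2

lemma epsSubdiff_real {f : X → EReal} {q : WeakDual ℝ X} {ε : ℝ} {x y : X} {a A : ℝ}
    (ha : f x = (a:EReal)) (hA : f y = (A:EReal)) (h : q ∈ epsSubdiff f ε x) :
    q y - q x + a ≤ A + ε := by
  have h3 := h.2.2 y
  rw [show q (y - x) = q y - q x from map_sub q y x, ha, hA, ← EReal.coe_add, ← EReal.coe_add,
    EReal.coe_le_coe_iff] at h3
  linarith


theorem hup_aux {X : Type*} [NormedAddCommGroup X] [NormedSpace ℝ X] [CompleteSpace X]
    (f g : X → EReal) (hf : EProper f) (hg : EProper g)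
    (hfl : LowerSemicontinuous f) (hgl : LowerSemicontinuous g)
    (hfc : EConvex f) (hgc : EConvex g)
    (hdom : (edom f ∩ edom g).Nonempty) :
    ∀ (x : X) (ε : ℝ), 0 ≤ ε →
      epsSubdiff (fun y => f y + g y) ε x =
        ⋂ η ∈ Set.Ioi (0 : ℝ),
          closure (⋃ (e : ℝ × ℝ) (_ : 0 ≤ e.1 ∧ 0 ≤ e.2 ∧ e.1 + e.2 = ε + η),
            epsSubdiff f e.1 x + epsSubdiff g e.2 x) := by
  obtain ⟨x₀, hx₀f, hx₀g⟩ := hdom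
  have hx₀f' : f x₀ ≠ ⊤ := LT.lt.ne hx₀f
  have hx₀g' : g x₀ ≠ ⊤ := LT.lt.ne hx₀g
  intro x ε hε
  ext p
  simp only [Set.mem_iInter, Set.mem_Ioi]
  constructor
  · intro hp η hη
    have hT : f x + g x ≠ ⊤ := hp.1
    have hineq : ∀ y : X, (p (y - x) : EReal) + (f x + g x) ≤ (f y + g y) + (ε : EReal) := hp.2.2
    have hfx : f x ≠ ⊤ := by
      intro h; exact hT (by rw [h]; exact EReal.top_add_of_ne_bot (hg.1 x))
    have hgx : g x ≠ ⊤ := by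
      intro h; exact hT (by rw [h]; exact EReal.add_top_of_ne_bot (hf.1 x))
    obtain ⟨a, ha⟩ := ereal_is_real (hf.1 x) hfx
    obtain ⟨b, hb⟩ := ereal_is_real (hg.1 x) hgx
    set r : ℝ := p x - a - b + ε with hrdef
    have hpr : ((p, r) : WeakDual ℝ X × ℝ) ∈ epiConj (fun y => f y + g y) := by
      show fconj _ p ≤ (r:EReal)
      rw [fconj_le_coe_iff]
      intro y
      have h1 := hineq y
      rw [show p (y - x) = p y - p x from map_sub p y x, ha, hb, ← EReal.coe_add,
        ← EReal.coe_add] at h1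
      have h2 := er_le_add_iff.1 h1
      have e2 : (p y - p x + (a + b) - ε : ℝ) = p y - r := by rw [hrdef]; ring
      rw [e2] at h2
      exact h2
    have hcl := epiConj_add_subset hf hg hfl hgl hfc hgc hx₀f' hx₀g' hpr
    rw [mem_closure_iff]
    intro U hU hpU
    set V : Set (WeakDual ℝ X × ℝ) :=
      (U ∩ (fun q : WeakDual ℝ X => q x) ⁻¹' Metric.ball (p x) (η/2)) ×ˢ Set.Ioo (r - 1) (r + η/2)
      with hVdef
    have hVopen : IsOpen V :=
      (hU.inter ((WeakDual.eval_continuous x).isOpen_preimage _ Metric.isOpen_ball)).prod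
        isOpen_Ioo
    have hpV : ((p, r) : WeakDual ℝ X × ℝ) ∈ V := by
      refine ⟨⟨hpU, ?_⟩, ⟨by linarith, by linarith⟩⟩
      show p x ∈ Metric.ball (p x) (η/2)
      simp [Metric.mem_ball]
      linarith
    obtain ⟨⟨pq, s⟩, hVmem, hKmem⟩ := mem_closure_iff.1 hcl V hVopen hpV
    obtain ⟨⟨q₁, s₁⟩, h1, ⟨q₂, s₂⟩, h2, hadd⟩ := hKmem
    have hq12 : q₁ + q₂ = pq := congrArg Prod.fst hadd
    have hs12 : s₁ + s₂ = s := congrArg Prod.snd hadd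
    have h1' : fconj f q₁ ≤ (s₁:EReal) := h1
    have h2' : fconj g q₂ ≤ (s₂:EReal) := h2
    obtain ⟨⟨hpqU, hball⟩, hIoo⟩ := hVmem
    have hball' : |pq x - p x| < η/2 := by
      have : dist (pq x) (p x) < η/2 := hball
      rwa [Real.dist_eq] at this
    set ε₁ : ℝ := s₁ + a - q₁ x with hε₁def
    set ε₂ : ℝ := s₂ + b - q₂ x with hε₂def
    have hε₁nn : 0 ≤ ε₁ := by
      have := fconj_le_real h1' ha
      rw [hε₁def]; linarith
    have hε₂nn : 0 ≤ ε₂ := by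
      have := fconj_le_real h2' hb
      rw [hε₂def]; linarith
    have hq1mem : q₁ ∈ epsSubdiff f ε₁ x := mem_epsSubdiff_of_fconj ha h1'
    have hq2mem : q₂ ∈ epsSubdiff g ε₂ x := mem_epsSubdiff_of_fconj hb h2'
    have hqx : q₁ x + q₂ x = pq x := by rw [← hq12]; rfl
    have hsumlt : ε₁ + ε₂ < ε + η := by
      have hs' : s < r + η/2 := hIoo.2
      rw [hε₁def, hε₂def, hrdef] at *
      have habs := abs_lt.1 hball'
      linarith [hs12 ▸ hs', habs.1, habs.2, hqx]
    set ε₂' : ℝ := ε + η - ε₁ with hε₂'def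
    have hq2mem' : q₂ ∈ epsSubdiff g ε₂' x :=
      epsSubdiff_mono (by rw [hε₂'def]; linarith) hq2mem
    refine ⟨pq, hpqU, ?_⟩
    rw [Set.mem_iUnion]
    refine ⟨(ε₁, ε₂'), ?_⟩
    rw [Set.mem_iUnion]
    refine ⟨⟨hε₁nn, by simp [hε₂'def]; linarith, by simp [hε₂'def]⟩, ?_⟩
    rw [← hq12]
    exact Set.add_mem_add hq1mem hq2mem'
  · intro hp
    have h₁ := hp 1 one_pos
    obtain ⟨q0, hq0⟩ := closure_nonempty_iff.1 ⟨p, h₁⟩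
    rw [Set.mem_iUnion] at hq0
    obtain ⟨e, hq0⟩ := hq0
    rw [Set.mem_iUnion] at hq0
    obtain ⟨he, hq0⟩ := hq0
    obtain ⟨q₁, h1, q₂, h2, -⟩ := hq0
    obtain ⟨a, ha⟩ := ereal_is_real (hf.1 x) h1.1
    obtain ⟨b, hb⟩ := ereal_is_real (hg.1 x) h2.1
    refine ⟨?_, ?_, fun y => ?_⟩
    · show f x + g x ≠ ⊤
      rw [ha, hb, ← EReal.coe_add]; exact EReal.coe_ne_top _
    · show f x + g x ≠ ⊥
      rw [ha, hb, ← EReal.coe_add]; exact EReal.coe_ne_bot _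
    · show (p (y - x) : EReal) + (f x + g x) ≤ (f y + g y) + (ε : EReal)
      by_cases hfy : f y = ⊤
      · rw [hfy, EReal.top_add_of_ne_bot (hg.1 y), EReal.top_add_of_ne_bot (EReal.coe_ne_bot ε)]
        exact le_top
      by_cases hgy : g y = ⊤
      · rw [hgy, EReal.add_top_of_ne_bot (hf.1 y), EReal.top_add_of_ne_bot (EReal.coe_ne_bot ε)]
        exact le_top
      obtain ⟨A, hA⟩ := ereal_is_real (hf.1 y) hfy
      obtain ⟨B, hB⟩ := ereal_is_real (hg.1 y) hgy
      have key : ∀ η : ℝ, 0 < η → p y - p x + a + b ≤ A + B + ε + η := by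
        intro η hη
        have hclosed : IsClosed {q : WeakDual ℝ X | q y - q x ≤ A + B + ε + η - a - b} :=
          isClosed_le ((WeakDual.eval_continuous y).sub (WeakDual.eval_continuous x))
            continuous_const
        have hsub : (⋃ (e : ℝ × ℝ) (_ : 0 ≤ e.1 ∧ 0 ≤ e.2 ∧ e.1 + e.2 = ε + η),
            epsSubdiff f e.1 x + epsSubdiff g e.2 x) ⊆
            {q : WeakDual ℝ X | q y - q x ≤ A + B + ε + η - a - b} := by
          intro q hq
          rw [Set.mem_iUnion] at hq
          obtain ⟨e', hq⟩ := hq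
          rw [Set.mem_iUnion] at hq
          obtain ⟨he', hq⟩ := hq
          obtain ⟨r₁, hr1, r₂, hr2, rfl⟩ := hq
          have k1 := epsSubdiff_real ha hA hr1
          have k2 := epsSubdiff_real hb hB hr2
          show (r₁ + r₂) y - (r₁ + r₂) x ≤ A + B + ε + η - a - b
          have e1 : (r₁ + r₂) y = r₁ y + r₂ y := rfl
          have e2 : (r₁ + r₂) x = r₁ x + r₂ x := rfl
          rw [e1, e2]
          have := he'.2.2
          linarith
        have hps := closure_minimal hsub hclosed (hp η hη)
        have : p y - p x ≤ A + B + ε + η - a - b := hps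
        linarith
      have hreal : p y - p x + a + b ≤ A + B + ε := by
        by_contra hlt
        push_neg at hlt
        have := key ((p y - p x + a + b - (A + B + ε))/2) (by linarith)
        linarith
      rw [show p (y - x) = p y - p x from map_sub p y x, ha, hb, hA, hB,
        ← EReal.coe_add, ← EReal.coe_add, ← EReal.coe_add, ← EReal.coe_add,
        EReal.coe_le_coe_iff]
      linarith


theorem stmt0 {X : Type*} [NormedAddCommGroup X] [NormedSpace ℝ X] [CompleteSpace X]
    (f g : X → EReal) (hf : EProper f) (hg : EProper g)
    (hfl : LowerSemicontinuous f) (hgl : LowerSemicontinuous g)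
    (hfc : EConvex f) (hgc : EConvex g)
    (hdom : (edom f ∩ edom g).Nonempty) :
    ∀ (x : X) (ε : ℝ), 0 ≤ ε →
      epsSubdiff (fun y => f y + g y) ε x =
        ⋂ η ∈ Set.Ioi (0 : ℝ),
          closure (⋃ (e : ℝ × ℝ) (_ : 0 ≤ e.1 ∧ 0 ≤ e.2 ∧ e.1 + e.2 = ε + η),
            epsSubdiff f e.1 x + epsSubdiff g e.2 x) := by
  exact hup_aux f g hf hg hfl hgl hfc hgc hdom
end
end

section
/- Let f₁, …, f_m : X → (-∞, +∞] be proper lower semicontinuous convex functions on a real Banach space X with ⋂ᵢ dom fᵢ ≠ ∅. If the infimal convolution f₁* □ ⋯ □ f_m* is weak* lower semicontinuous, then for every x ∈ ⋂ᵢ dom fᵢ and every ε > 0, the weak* closure of ∑ᵢ ∂_ε fᵢ(x) is contained in ∑ᵢ ∂_{(m+1)ε} fᵢ(x). -/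
open Pointwise Topology Set

noncomputable section

variable {X : Type*} [NormedAddCommGroup X] [NormedSpace ℝ X]

/- Auxiliary lemmas -/

lemma ereal_coe_sum {ι : Type*} (s : Finset ι) (c : ι → ℝ) :
    ((∑ i ∈ s, c i : ℝ) : EReal) = ∑ i ∈ s, (c i : EReal) := by
  induction s using Finset.cons_induction with
  | empty => simp
  | cons a s ha ih => simp [Finset.sum_cons, ih]

lemma weakdual_sum_apply {m : ℕ} (q : Fin m → WeakDual ℝ X) (x : X) :
    (∑ i, q i) x = ∑ i, q i x :=
  map_sum (AddMonoidHom.mk' (fun p : WeakDual ℝ X => p x) (fun a b => rfl)) q Finset.univ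

lemma isClosed_lsc_le {α : Type*} [TopologicalSpace α] {F : α → EReal} {h : α → ℝ}
    (hF : LowerSemicontinuous F) (hh : Continuous h) :
    IsClosed {p : α | F p ≤ ((h p : ℝ) : EReal)} := by
  rw [← isOpen_compl_iff, isOpen_iff_mem_nhds]
  intro p hp
  rw [mem_compl_iff, mem_setOf_eq, not_le] at hp
  obtain ⟨r, hr1, hr2⟩ := EReal.exists_between_coe_real hp
  have h1 : ∀ᶠ p' in 𝓝 p, (r : EReal) < F p' := hF p _ hr2
  have hpr : h p < r := by exact_mod_cast hr1
  have h2 : ∀ᶠ p' in 𝓝 p, h p' < r :=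
    (isOpen_lt hh continuous_const).eventually_mem hpr
  filter_upwards [h1, h2] with p' H1 H2
  rw [mem_compl_iff, mem_setOf_eq, not_le]
  exact lt_trans (by exact_mod_cast H2 : ((h p' : ℝ) : EReal) < (r : EReal)) H1

lemma fconj_le_iff {X : Type*} [NormedAddCommGroup X] [NormedSpace ℝ X]
    {f : X → EReal} (hbot : ∀ z, f z ≠ ⊥) {x : X} {c : ℝ} (hfx : f x = (c : EReal))
    (q : WeakDual ℝ X) (δ : ℝ) :
    fconj f q ≤ ((q x - c + δ : ℝ) : EReal) ↔
      ∀ z : X, (q (z - x) : EReal) + f x ≤ f z + (δ : EReal) := by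
  have hqsub : ∀ z : X, q (z - x) = q z - q x := fun z => map_sub q z x
  constructor
  · intro H z
    rcases eq_or_ne (f z) ⊤ with hz | hz
    · rw [hz, EReal.top_add_of_ne_bot (by exact_mod_cast EReal.coe_ne_bot δ)]
      exact le_top
    · obtain ⟨r, hr⟩ : ∃ r : ℝ, f z = (r : EReal) :=
        ⟨(f z).toReal, (EReal.coe_toReal hz (hbot z)).symm⟩
      have h1 : ((q z : ℝ) : EReal) - f z ≤ fconj f q :=
        le_iSup (fun w => ((q w : ℝ) : EReal) - f w) z
      rw [hr] at h1
      have h2 : (q z - r : ℝ) ≤ q x - c + δ := by exact_mod_cast h1.trans H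
      rw [hfx, hr, hqsub z]
      exact_mod_cast (by linarith : q z - q x + c ≤ r + δ)
  · intro H
    refine iSup_le fun z => ?_
    rcases eq_or_ne (f z) ⊤ with hz | hz
    · rw [hz, EReal.sub_top]; exact bot_le
    · obtain ⟨r, hr⟩ : ∃ r : ℝ, f z = (r : EReal) :=
        ⟨(f z).toReal, (EReal.coe_toReal hz (hbot z)).symm⟩
      have H1 := H z
      rw [hfx, hr, hqsub z] at H1
      have h2 : q z - q x + c ≤ r + δ := by exact_mod_cast H1
      rw [hr]
      exact_mod_cast (by linarith : q z - r ≤ q x - c + δ)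


theorem stmt3 {X : Type*} [NormedAddCommGroup X] [NormedSpace ℝ X] [CompleteSpace X]
    {m : ℕ} (hm : 1 ≤ m) (f : Fin m → X → EReal)
    (hp : ∀ i, EProper (f i)) (hl : ∀ i, LowerSemicontinuous (f i)) (hc : ∀ i, EConvex (f i))
    (hdom : (⋂ i, edom (f i)).Nonempty)
    (hlsc : LowerSemicontinuous (infConv (fun i => fconj (f i)))) :
    ∀ x ∈ ⋂ i, edom (f i), ∀ ε > (0 : ℝ),
      closure (∑ i, epsSubdiff (f i) ε x) ⊆
        ∑ i, epsSubdiff (f i) (((m : ℝ) + 1) * ε) x := by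
  intro x hx ε hε
  have hxi : ∀ i, f i x ≠ ⊤ := fun i => (mem_iInter.1 hx i).ne
  have hbi : ∀ i, f i x ≠ ⊥ := fun i => (hp i).1 x
  set c : Fin m → ℝ := fun i => (f i x).toReal with hc'
  have hfc : ∀ i, f i x = (c i : EReal) := fun i => (EReal.coe_toReal (hxi i) (hbi i)).symm
  set g : Fin m → WeakDual ℝ X → EReal := fun i => fconj (f i) with hg
  set C : Set (WeakDual ℝ X) :=
    {p | infConv g p ≤ ((p x + m * ε - ∑ i, c i : ℝ) : EReal)} with hC
  have hCc : IsClosed C := by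
    refine isClosed_lsc_le hlsc ?_
    exact ((WeakDual.eval_continuous x).add continuous_const).sub continuous_const
  have hSC : (∑ i, epsSubdiff (f i) ε x) ⊆ C := by
    intro p hpS
    obtain ⟨q, hq, hqp⟩ := (Set.mem_fintype_sum _ p).1 hpS
    have key : ∀ i, g i (q i) ≤ ((q i x - c i + ε : ℝ) : EReal) := fun i =>
      (fconj_le_iff (fun z => (hp i).1 z) (hfc i) (q i) ε).2 (hq i).2.2
    have h1 : infConv g p ≤ ∑ i, g i (q i) := iInf₂_le q hqp
    have h2 : (∑ i, (q i x - c i + ε) : ℝ) = p x + m * ε - ∑ i, c i := by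
      rw [← hqp, weakdual_sum_apply]
      rw [Finset.sum_add_distrib, Finset.sum_sub_distrib, Finset.sum_const,
        Finset.card_univ, Fintype.card_fin, nsmul_eq_mul]
      ring
    calc infConv g p ≤ ∑ i, g i (q i) := h1
      _ ≤ ∑ i, ((q i x - c i + ε : ℝ) : EReal) := Finset.sum_le_sum fun i _ => key i
      _ = ((∑ i, (q i x - c i + ε) : ℝ) : EReal) := (ereal_coe_sum _ _).symm
      _ = ((p x + m * ε - ∑ i, c i : ℝ) : EReal) := by rw [h2]
  intro p hpcl
  have hpC : p ∈ C := closure_minimal hSC hCc hpcl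
  set B : ℝ := p x - ∑ i, c i + ((m : ℝ) + 1) * ε with hB
  have hlt : infConv g p < ((B : ℝ) : EReal) := by
    refine lt_of_le_of_lt hpC ?_
    have : p x + m * ε - ∑ i, c i < B := by
      rw [hB]; nlinarith
    exact_mod_cast this
  rw [infConv] at hlt
  obtain ⟨y, hy1⟩ := iInf_lt_iff.1 hlt
  obtain ⟨hy, hlt2⟩ := iInf_lt_iff.1 hy1
  -- lower bounds on each conjugate value
  have hlb : ∀ i, ((y i x - c i : ℝ) : EReal) ≤ g i (y i) := by
    intro i
    have h1 : ((y i x : ℝ) : EReal) - f i x ≤ fconj (f i) (y i) :=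
      le_iSup (fun w => ((y i w : ℝ) : EReal) - f i w) x
    rw [hfc i] at h1
    exact_mod_cast h1
  have hpx : p x = ∑ i, y i x := by rw [← hy, weakdual_sum_apply]
  -- per-index upper bound
  have hub : ∀ j, g j (y j) ≤ ((y j x - c j + ((m : ℝ) + 1) * ε : ℝ) : EReal) := by
    intro j
    set R : ℝ := ∑ i ∈ Finset.univ.erase j, (y i x - c i) with hR
    have hsplit : ∑ i, g i (y i) = g j (y j) + ∑ i ∈ Finset.univ.erase j, g i (y i) :=
      (Finset.add_sum_erase _ _ (Finset.mem_univ j)).symm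
    have h3 : ((R : ℝ) : EReal) ≤ ∑ i ∈ Finset.univ.erase j, g i (y i) := by
      rw [hR, ereal_coe_sum]
      exact Finset.sum_le_sum fun i _ => hlb i
    have h4 : g j (y j) + ((R : ℝ) : EReal) < ((B : ℝ) : EReal) := by
      calc g j (y j) + ((R : ℝ) : EReal)
          ≤ g j (y j) + ∑ i ∈ Finset.univ.erase j, g i (y i) := add_le_add (le_refl _) h3
        _ = ∑ i, g i (y i) := hsplit.symm
        _ < ((B : ℝ) : EReal) := hlt2
    have h5 : g j (y j) ≤ ((B - R : ℝ) : EReal) := by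
      have := EReal.sub_le_sub h4.le (le_refl ((R : ℝ) : EReal))
      rwa [EReal.add_sub_cancel_right, ← EReal.coe_sub] at this
    have hBR : B - R = y j x - c j + ((m : ℝ) + 1) * ε := by
      have hsum1 : ∑ i, (y i x - c i) = (y j x - c j) + R :=
        (Finset.add_sum_erase _ _ (Finset.mem_univ j)).symm
      have hsum2 : ∑ i, (y i x - c i) = (∑ i, y i x) - ∑ i, c i :=
        Finset.sum_sub_distrib _ _
      rw [hB, hpx]
      linarith [hsum1, hsum2]
    rwa [hBR] at h5
  refine (Set.mem_fintype_sum _ p).2 ⟨y, fun i => ?_, hy⟩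
  exact ⟨hxi i, hbi i,
    (fconj_le_iff (fun z => (hp i).1 z) (hfc i) (y i) (((m : ℝ) + 1) * ε)).1 (hub i)⟩
end
end

section
/- Let f₁, …, f_m : X → (-∞, +∞] be proper convex functions on a real Banach space X with ⋂ᵢ dom fᵢ ≠ ∅. If (∑ᵢ fᵢ)* = f₁* □ ⋯ □ f_m* on X* and the infimal convolution is exact (attained) everywhere, then ∂(f₁+⋯+f_m)(x) = ∂f₁(x) + ⋯ + ∂f_m(x) for all x ∈ X. -/
open Pointwise Topology Set

noncomputable section

variable {X : Type*} [NormedAddCommGroup X] [NormedSpace ℝ X]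

/-! ### auxiliary lemmas -/

lemma ecoe_sum {ι : Type*} (s : Finset ι) (a : ι → ℝ) :
    ((∑ i ∈ s, a i : ℝ) : EReal) = ∑ i ∈ s, (a i : EReal) :=
  map_sum (⟨⟨(fun r : ℝ => (r : EReal)), rfl⟩, fun _ _ => EReal.coe_add _ _⟩ : ℝ →+ EReal) a s

lemma eval_sum {ι : Type*} (s : Finset ι) (y : ι → WeakDual ℝ X) (x : X) :
    (∑ i ∈ s, y i) x = ∑ i ∈ s, y i x :=
  map_sum (⟨⟨(fun p : WeakDual ℝ X => p x), rfl⟩, fun _ _ => rfl⟩ : WeakDual ℝ X →+ ℝ) y s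

lemma sum_ne_bot' {ι : Type*} (s : Finset ι) (g : ι → EReal) (h : ∀ i ∈ s, g i ≠ ⊥) :
    ∑ i ∈ s, g i ≠ ⊥ := by
  induction s using Finset.cons_induction with
  | empty => simp
  | cons i s hi ih =>
    rw [Finset.sum_cons]
    intro hbot
    rcases EReal.add_eq_bot_iff.1 hbot with h1 | h1
    · exact h i (Finset.mem_cons_self i s) h1
    · exact ih (fun j hj => h j (Finset.mem_cons_of_mem hj)) h1

lemma fy (f : X → EReal) (p : WeakDual ℝ X) (z : X) : (p z : EReal) - f z ≤ fconj f p :=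
  le_iSup (fun z => (p z : EReal) - f z) z

lemma add_coe_le_coe_iff {c : EReal} (hc : c ≠ ⊥) (a r : ℝ) :
    c + (a : EReal) ≤ (r : EReal) ↔ c ≤ ((r - a : ℝ) : EReal) := by
  induction c using EReal.rec with
  | bot => simp at hc
  | coe b =>
    rw [← EReal.coe_add, EReal.coe_le_coe_iff, EReal.coe_le_coe_iff]
    constructor <;> intro h <;> linarith
  | top =>
    rw [EReal.top_add_of_ne_bot (EReal.coe_ne_bot a)]
    simp only [top_le_iff]
    constructor
    · exact fun h => absurd h (EReal.coe_ne_top r)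
    · exact fun h => absurd h (EReal.coe_ne_top _)

lemma key_iff {c : EReal} (hc : c ≠ ⊥) (u v : ℝ) :
    (u : EReal) ≤ c ↔ (v : EReal) - c ≤ ((v - u : ℝ) : EReal) := by
  induction c using EReal.rec with
  | bot => simp at hc
  | coe b =>
    rw [← EReal.coe_sub, EReal.coe_le_coe_iff, EReal.coe_le_coe_iff]
    constructor <;> intro h <;> linarith
  | top =>
    simp [EReal.coe_sub]

lemma mem_subdiff_iff {f : X → EReal} (hb : ∀ y, f y ≠ ⊥) {x : X} (hx : f x ≠ ⊤)
    (p : WeakDual ℝ X) :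
    p ∈ subdiff f x ↔ fconj f p + f x ≤ (p x : EReal) := by
  obtain ⟨a, ha⟩ : ∃ a : ℝ, f x = (a : EReal) := ⟨_, (EReal.coe_toReal hx (hb x)).symm⟩
  have hfc : fconj f p ≠ ⊥ := by
    intro h
    have h2 := fy f p x
    rw [h, ha, ← EReal.coe_sub, le_bot_iff] at h2
    exact EReal.coe_ne_bot _ h2
  rw [ha, add_coe_le_coe_iff hfc, fconj, iSup_le_iff]
  simp only [subdiff, epsSubdiff, Set.mem_setOf_eq, EReal.coe_zero, add_zero, ha]
  constructor
  · rintro ⟨-, -, h⟩ y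
    have h3 := h y
    rw [map_sub, ← EReal.coe_add] at h3
    have h4 := (key_iff (hb y) (p y - p x + a) (p y)).mp h3
    have : p y - (p y - p x + a) = p x - a := by ring
    rwa [this] at h4
  · intro h
    refine ⟨EReal.coe_ne_top a, EReal.coe_ne_bot a, fun y => ?_⟩
    rw [map_sub, ← EReal.coe_add]
    have h4 := h y
    have : p x - a = p y - (p y - p x + a) := by ring
    rw [this] at h4
    exact (key_iff (hb y) (p y - p x + a) (p y)).mpr h4


theorem stmt6 {X : Type*} [NormedAddCommGroup X] [NormedSpace ℝ X] [CompleteSpace X]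
    {m : ℕ} (hm : 1 ≤ m) (f : Fin m → X → EReal)
    (hp : ∀ i, EProper (f i)) (hc : ∀ i, EConvex (f i))
    (hdom : (⋂ i, edom (f i)).Nonempty)
    (heq : ∀ p : WeakDual ℝ X,
      fconj (fun x => ∑ i, f i x) p = infConv (fun i => fconj (f i)) p)
    (hexact : ∀ p : WeakDual ℝ X, infConvExactAt (fun i => fconj (f i)) p) :
    ∀ x : X, subdiff (fun y => ∑ i, f i y) x = ∑ i, subdiff (f i) x := by
  intro x
  set F : X → EReal := fun y => ∑ i, f i y with hF
  have hFb : ∀ y, F y ≠ ⊥ := fun y => sum_ne_bot' _ _ (fun i _ => (hp i).1 y)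
  by_cases hxtop : F x = ⊤
  · -- `F x = ⊤` : both sides are empty
    have hex : ∃ i, f i x = ⊤ := by
      by_contra hcon
      push_neg at hcon
      have hFx : F x = ((∑ i, (f i x).toReal : ℝ) : EReal) := by
        rw [ecoe_sum]
        exact Finset.sum_congr rfl
          (fun i _ => (EReal.coe_toReal (hcon i) ((hp i).1 x)).symm)
      rw [hFx] at hxtop
      exact EReal.coe_ne_top _ hxtop
    obtain ⟨i, hi⟩ := hex
    ext q
    simp only [subdiff, epsSubdiff, Set.mem_setOf_eq, Set.mem_fintype_sum]
    constructor
    · rintro ⟨h1, -, -⟩; exact absurd hxtop h1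
    · rintro ⟨g, hg, -⟩
      obtain ⟨h1, -, -⟩ := hg i
      exact absurd hi h1
  · -- each `f i x` is finite
    have hfitop : ∀ i, f i x ≠ ⊤ := by
      intro i hi
      apply hxtop
      have hFx : F x = f i x + ∑ j ∈ Finset.univ.erase i, f j x :=
        (Finset.add_sum_erase _ _ (Finset.mem_univ i)).symm
      rw [hFx, hi, EReal.top_add_of_ne_bot (sum_ne_bot' _ _ (fun j _ => (hp j).1 x))]
    obtain ⟨a, hfa⟩ : ∃ a : Fin m → ℝ, ∀ i, f i x = ((a i : ℝ) : EReal) :=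
      ⟨_, fun i => (EReal.coe_toReal (hfitop i) ((hp i).1 x)).symm⟩
    have hFx : F x = ((∑ i, a i : ℝ) : EReal) := by
      rw [ecoe_sum]
      exact Finset.sum_congr rfl (fun i _ => hfa i)
    ext q
    constructor
    · -- hard inclusion
      intro hq
      rw [mem_subdiff_iff hFb hxtop] at hq
      obtain ⟨y, hysum, hyval⟩ := hexact q
      have hFq : fconj F q = ∑ i, fconj (f i) (y i) := (heq q).trans hyval
      have hbot : ∀ i, fconj (f i) (y i) ≠ ⊥ := by
        intro i h
        have h2 := fy (f i) (y i) x
        rw [h, hfa i, ← EReal.coe_sub, le_bot_iff] at h2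
        exact EReal.coe_ne_bot _ h2
      have htop : ∀ i, fconj (f i) (y i) ≠ ⊤ := by
        intro i hi
        have hFqt : fconj F q = ⊤ := by
          rw [hFq, ← Finset.add_sum_erase _ _ (Finset.mem_univ i), hi,
            EReal.top_add_of_ne_bot (sum_ne_bot' _ _ (fun j _ => hbot j))]
        rw [hFqt, EReal.top_add_of_ne_bot (hFb x), top_le_iff] at hq
        exact EReal.coe_ne_top _ hq
      obtain ⟨b, hfb⟩ : ∃ b : Fin m → ℝ, ∀ i, fconj (f i) (y i) = ((b i : ℝ) : EReal) :=
        ⟨_, fun i => (EReal.coe_toReal (htop i) (hbot i)).symm⟩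
      have hsb : fconj F q = ((∑ i, b i : ℝ) : EReal) := by
        rw [hFq, ecoe_sum]
        exact Finset.sum_congr rfl (fun i _ => hfb i)
      rw [hsb, hFx, ← EReal.coe_add, EReal.coe_le_coe_iff] at hq
      have hqx : q x = ∑ i, y i x := by rw [← hysum, eval_sum]
      have hfyr : ∀ i, y i x - a i ≤ b i := by
        intro i
        have h2 := fy (f i) (y i) x
        rw [hfa i, hfb i, ← EReal.coe_sub, EReal.coe_le_coe_iff] at h2
        exact h2
      have hkey : ∀ i, b i + a i ≤ y i x := by
        intro i
        by_contra hlt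
        push_neg at hlt
        have hsum : ∑ j, y j x < ∑ j, (b j + a j) :=
          Finset.sum_lt_sum (fun j _ => by linarith [hfyr j]) ⟨i, Finset.mem_univ i, hlt⟩
        rw [Finset.sum_add_distrib] at hsum
        rw [hqx] at hq
        linarith
      rw [Set.mem_fintype_sum]
      refine ⟨y, fun i => ?_, hysum⟩
      rw [mem_subdiff_iff ((hp i).1) (hfitop i)]
      rw [hfb i, hfa i, ← EReal.coe_add, EReal.coe_le_coe_iff]
      exact hkey i
    · -- easy inclusion
      intro hq
      rw [Set.mem_fintype_sum] at hq
      obtain ⟨y, hy, hysum⟩ := hq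
      have hmem : ∀ i, fconj (f i) (y i) + f i x ≤ ((y i x : ℝ) : EReal) :=
        fun i => (mem_subdiff_iff ((hp i).1) (hfitop i) (y i)).1 (hy i)
      have hbot : ∀ i, fconj (f i) (y i) ≠ ⊥ := by
        intro i h
        have h2 := fy (f i) (y i) x
        rw [h, hfa i, ← EReal.coe_sub, le_bot_iff] at h2
        exact EReal.coe_ne_bot _ h2
      have htop : ∀ i, fconj (f i) (y i) ≠ ⊤ := by
        intro i h
        have h2 := hmem i
        rw [h, hfa i, EReal.top_add_of_ne_bot (EReal.coe_ne_bot _), top_le_iff] at h2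
        exact EReal.coe_ne_top _ h2
      obtain ⟨b, hfb⟩ : ∃ b : Fin m → ℝ, ∀ i, fconj (f i) (y i) = ((b i : ℝ) : EReal) :=
        ⟨_, fun i => (EReal.coe_toReal (htop i) (hbot i)).symm⟩
      have hki : ∀ i, b i + a i ≤ y i x := by
        intro i
        have h2 := hmem i
        rw [hfb i, hfa i, ← EReal.coe_add, EReal.coe_le_coe_iff] at h2
        exact h2
      have h1 : fconj F q ≤ ∑ i, fconj (f i) (y i) := by
        rw [heq q]
        exact iInf_le_of_le y (iInf_le_of_le hysum le_rfl)
      have hsb : (∑ i, fconj (f i) (y i)) = ((∑ i, b i : ℝ) : EReal) := by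
        rw [ecoe_sum]
        exact Finset.sum_congr rfl (fun i _ => hfb i)
      rw [mem_subdiff_iff hFb hxtop]
      calc fconj F q + F x ≤ (∑ i, fconj (f i) (y i)) + F x := add_le_add_left h1 _
        _ = ((∑ i, b i + ∑ i, a i : ℝ) : EReal) := by rw [hsb, hFx, EReal.coe_add]
        _ ≤ ((q x : ℝ) : EReal) := by
            rw [EReal.coe_le_coe_iff, ← hysum, eval_sum]
            have h2 := Finset.sum_le_sum (fun i (_ : i ∈ Finset.univ) => hki i)
            rwa [Finset.sum_add_distrib] at h2
end
end

section
/- Let C := {(x, y) ∈ ℝ² : 2x + y² ≤ 0} and D := {(x, y) ∈ ℝ² : x ≥ 0}, and set f := ι_C, g := ι_D (indicator functions). Then for every ε > 0, ∂_ε f(0,0) = ⋃_{u ≥ 0} {u} × [−√(2εu), √(2εu)] and ∂_ε g(0,0) = (−∞, 0] × {0}, and consequently ∂_ε f(0,0) + ∂_ε g(0,0) = ℝ². -/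
open Pointwise Topology Set

noncomputable section

variable {X : Type*} [NormedAddCommGroup X] [NormedSpace ℝ X]

namespace Stmt9Aux

noncomputable def LL (a b : ℝ) : WeakDual ℝ (ℝ × ℝ) :=
  (a • (ContinuousLinearMap.fst ℝ ℝ ℝ) + b • (ContinuousLinearMap.snd ℝ ℝ ℝ) : (ℝ × ℝ) →L[ℝ] ℝ)

lemma LL_apply (a b : ℝ) (z : ℝ × ℝ) : LL a b z = a * z.1 + b * z.2 := rfl

lemma apply_eq (p : WeakDual ℝ (ℝ × ℝ)) (z : ℝ × ℝ) :
    p z = z.1 * p (1, 0) + z.2 * p (0, 1) := by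
  have hz : z = z.1 • ((1:ℝ), (0:ℝ)) + z.2 • ((0:ℝ), (1:ℝ)) := by ext <;> simp
  conv_lhs => rw [hz]
  rw [map_add, map_smul, map_smul]
  simp [smul_eq_mul]

lemma add_apply' (p q : WeakDual ℝ (ℝ × ℝ)) (z : ℝ × ℝ) : (p + q) z = p z + q z := rfl

lemma mem_iff (c : ℝ × ℝ → Prop) [DecidablePred c] (h0 : c 0) (ε : ℝ)
    (p : WeakDual ℝ (ℝ × ℝ)) :
    p ∈ epsSubdiff (fun z => if c z then (0:EReal) else ⊤) ε 0 ↔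
      ∀ z, c z → p z ≤ ε := by
  simp only [epsSubdiff, Set.mem_setOf_eq, if_pos h0, sub_zero, add_zero]
  constructor
  · rintro ⟨-, -, h⟩ z hz
    have := h z
    rw [if_pos hz, zero_add] at this
    exact_mod_cast this
  · intro h
    refine ⟨by simp, by simp, fun y => ?_⟩
    by_cases hy : c y
    · rw [if_pos hy, zero_add]
      exact_mod_cast h y hy
    · rw [if_neg hy]
      exact le_of_le_of_eq le_top (EReal.top_add_coe ε).symm

lemma set1_eq {ε : ℝ} (hε : 0 < ε) :
    epsSubdiff (fun z : ℝ × ℝ => if 2 * z.1 + z.2 ^ 2 ≤ 0 then (0 : EReal) else ⊤) ε 0 =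
      {p : WeakDual ℝ (ℝ × ℝ) |
        ∃ u : ℝ, 0 ≤ u ∧ p (1, 0) = u ∧ |p (0, 1)| ≤ Real.sqrt (2 * ε * u)} := by
  ext p
  rw [mem_iff (fun z : ℝ × ℝ => 2 * z.1 + z.2 ^ 2 ≤ 0) (by norm_num) ε p]
  set a := p (1, 0) with ha'
  set b := p (0, 1) with hb'
  have key : (∀ z : ℝ × ℝ, 2 * z.1 + z.2 ^ 2 ≤ 0 → p z ≤ ε) ↔ (0 ≤ a ∧ b ^ 2 ≤ 2 * ε * a) := by
    constructor
    · intro H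
      have key2 : ∀ y : ℝ, b * y ≤ ε + a * y ^ 2 / 2 := by
        intro y
        have := H (-y ^ 2 / 2, y) (by norm_num; ring_nf; nlinarith [sq_nonneg y])
        rw [apply_eq] at this
        simp only [← ha', ← hb'] at this
        nlinarith [this]
      have hA : 0 ≤ a := by
        by_contra hA
        push_neg at hA
        have := H ((ε + 1) / a, 0) (by
          have h2 : (ε + 1) / a < 0 := div_neg_of_pos_of_neg (by linarith) hA
          norm_num
          nlinarith)
        rw [apply_eq] at this
        simp only [← ha', ← hb'] at this
        have hane : a ≠ 0 := ne_of_lt hA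
        rw [div_mul_cancel₀ _ hane] at this
        · linarith
      refine ⟨hA, ?_⟩
      rcases eq_or_lt_of_le hA with h0 | h0
      · -- a = 0 : show b = 0
        have hb0 : b = 0 := by
          by_contra hb0
          have h1 := key2 ((ε + 1) / b)
          rw [mul_div_cancel₀ _ hb0, ← h0] at h1
          simp at h1
          linarith
        rw [hb0, ← h0]
        norm_num
      · have h1 := key2 (b / a)
        have hane : a ≠ 0 := ne_of_gt h0
        have h2 := mul_le_mul_of_nonneg_right h1 (le_of_lt h0)
        have e1 : b / a * a = b := div_mul_cancel₀ b hane
        nlinarith [h2, e1]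
    · rintro ⟨hA, hB⟩ z hz
      rw [apply_eq]
      simp only [← ha', ← hb']
      have h1 : a * z.1 ≤ -(a * z.2 ^ 2) / 2 := by nlinarith [mul_le_mul_of_nonneg_left (show z.1 ≤ -z.2 ^ 2 / 2 by linarith) hA]
      nlinarith [sq_nonneg (2 * ε - b * z.2), mul_nonneg (show (0:ℝ) ≤ 2 * ε * a - b ^ 2 by linarith) (sq_nonneg z.2), hε]
  rw [key]
  constructor
  · rintro ⟨hA, hB⟩
    refine ⟨a, hA, rfl, ?_⟩
    calc |b| = Real.sqrt (b ^ 2) := (Real.sqrt_sq_eq_abs b).symm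
      _ ≤ Real.sqrt (2 * ε * a) := Real.sqrt_le_sqrt hB
  · rintro ⟨u, hu, hau, hbu⟩
    rw [← ha'] at hau
    rw [← hb'] at hbu
    subst hau
    refine ⟨hu, ?_⟩
    have h2 : |b| ^ 2 ≤ Real.sqrt (2 * ε * a) ^ 2 :=
      pow_le_pow_left₀ (abs_nonneg b) hbu 2
    rw [Real.sq_sqrt (mul_nonneg (by positivity) hu), sq_abs] at h2
    exact h2

lemma set2_eq {ε : ℝ} (hε : 0 < ε) :
    epsSubdiff (fun z : ℝ × ℝ => if 0 ≤ z.1 then (0 : EReal) else ⊤) ε 0 =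
      {p : WeakDual ℝ (ℝ × ℝ) | p (1, 0) ≤ 0 ∧ p (0, 1) = 0} := by
  ext p
  rw [mem_iff (fun z : ℝ × ℝ => 0 ≤ z.1) (le_refl 0) ε p]
  set a := p (1, 0) with ha'
  set b := p (0, 1) with hb'
  constructor
  · intro H
    have hb0 : b = 0 := by
      by_contra hb0
      have h1 := H (0, (ε + 1) / b) (le_refl 0)
      rw [apply_eq] at h1
      simp only [← ha', ← hb'] at h1
      rw [div_mul_cancel₀ _ hb0] at h1
      simp at h1
      linarith
    refine ⟨?_, hb0⟩
    by_contra hA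
    push_neg at hA
    have h1 := H ((ε + 1) / a, 0) (by positivity)
    rw [apply_eq] at h1
    simp only [← ha', ← hb'] at h1
    rw [div_mul_cancel₀ _ (ne_of_gt hA)] at h1
    simp at h1
    linarith
  · rintro ⟨hA, hB⟩ z hz
    rw [apply_eq]
    simp only [← ha', ← hb']
    have hA' : a ≤ 0 := by rw [ha']; exact hA
    have hB' : b = 0 := hb'.trans hB
    nlinarith [mul_nonpos_of_nonneg_of_nonpos hz hA', mul_eq_zero_of_right z.2 hB']


lemma sum_eq {ε : ℝ} (hε : 0 < ε) :
    {p : WeakDual ℝ (ℝ × ℝ) |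
        ∃ u : ℝ, 0 ≤ u ∧ p (1, 0) = u ∧ |p (0, 1)| ≤ Real.sqrt (2 * ε * u)} +
      {p : WeakDual ℝ (ℝ × ℝ) | p (1, 0) ≤ 0 ∧ p (0, 1) = 0} = Set.univ := by
  rw [Set.eq_univ_iff_forall]
  intro p
  set a := p (1, 0) with ha'
  set b := p (0, 1) with hb'
  set u : ℝ := max a (b ^ 2 / (2 * ε)) with hu'
  have hu0 : 0 ≤ u := le_trans (by positivity) (le_max_right _ _)
  have hub : b ^ 2 ≤ 2 * ε * u := by
    have h1 : b ^ 2 / (2 * ε) ≤ u := le_max_right _ _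
    calc b ^ 2 = 2 * ε * (b ^ 2 / (2 * ε)) := by field_simp
      _ ≤ 2 * ε * u := by nlinarith [h1, hε]
  refine Set.mem_add.mpr ⟨LL u b, ⟨u, hu0, ?_, ?_⟩, LL (a - u) 0, ⟨?_, ?_⟩, ?_⟩
  · rw [LL_apply]; ring
  · rw [LL_apply]
    have : u * (0:ℝ) + b * 1 = b := by ring
    rw [this]
    calc |b| = Real.sqrt (b ^ 2) := (Real.sqrt_sq_eq_abs b).symm
      _ ≤ Real.sqrt (2 * ε * u) := Real.sqrt_le_sqrt hub
  · rw [LL_apply]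
    have h1 : a ≤ u := le_max_left _ _
    norm_num
    linarith
  · rw [LL_apply]; ring
  · apply DFunLike.ext
    intro z
    rw [add_apply', LL_apply, LL_apply, apply_eq p z, ← ha', ← hb']
    ring

end Stmt9Aux

theorem stmt9 :
    ∀ ε > (0 : ℝ),
      epsSubdiff (fun z : ℝ × ℝ => if 2 * z.1 + z.2 ^ 2 ≤ 0 then (0 : EReal) else ⊤) ε 0 =
        {p : WeakDual ℝ (ℝ × ℝ) |
          ∃ u : ℝ, 0 ≤ u ∧ p (1, 0) = u ∧ |p (0, 1)| ≤ Real.sqrt (2 * ε * u)} ∧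
      epsSubdiff (fun z : ℝ × ℝ => if 0 ≤ z.1 then (0 : EReal) else ⊤) ε 0 =
        {p : WeakDual ℝ (ℝ × ℝ) | p (1, 0) ≤ 0 ∧ p (0, 1) = 0} ∧
      epsSubdiff (fun z : ℝ × ℝ => if 2 * z.1 + z.2 ^ 2 ≤ 0 then (0 : EReal) else ⊤) ε 0 +
        epsSubdiff (fun z : ℝ × ℝ => if 0 ≤ z.1 then (0 : EReal) else ⊤) ε 0 = Set.univ := by
  intro ε hε
  refine ⟨Stmt9Aux.set1_eq hε, Stmt9Aux.set2_eq hε, ?_⟩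
  rw [Stmt9Aux.set1_eq hε, Stmt9Aux.set2_eq hε]
  exact Stmt9Aux.sum_eq hε
end
end

section
/- Let f, g : X → (-∞, +∞] be proper lower semicontinuous sublinear functions on a real Banach space X. Then the following are equivalent: (a) epi f* + epi g* is weak*×ℝ closed; (b) (f+g)* = f* □ g* and the infimal convolution is exact everywhere; (c) ∂(f+g)(x) = ∂f(x) + ∂g(x) for all x ∈ X. -/
open Pointwise Topology Set

noncomputable section

variable {X : Type*} [NormedAddCommGroup X] [NormedSpace ℝ X]

/-- `f` is sublinear. -/
def ESublinear {X : Type*} [NormedAddCommGroup X] [NormedSpace ℝ X] (f : X → EReal) : Prop :=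
  f 0 = 0 ∧ (∀ x ∈ edom f, ∀ y ∈ edom f, f (x + y) ≤ f x + f y) ∧
    ∀ t : ℝ, 0 ≤ t → ∀ x ∈ edom f, f (t • x) = (t : EReal) * f x

set_option linter.unusedSectionVars false
section Aux
variable {X : Type*} [NormedAddCommGroup X] [NormedSpace ℝ X]

/-- support set of a sublinear function -/
def sset (f : X → EReal) : Set (WeakDual ℝ X) := {p | ∀ x, (p x : EReal) ≤ f x}

lemma freal {f : X → EReal} (hf : EProper f) {x : X} (hx : x ∈ edom f) :
    f x = ((f x).toReal : EReal) := (EReal.coe_toReal (ne_of_lt hx) (hf.1 x)).symm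

lemma zero_mem_edom {f : X → EReal} (hfs : ESublinear f) : (0 : X) ∈ edom f := by
  show f 0 < ⊤; rw [hfs.1]; exact EReal.zero_lt_top

lemma edom_smul {f : X → EReal} (hf : EProper f) (hfs : ESublinear f) {x : X} (hx : x ∈ edom f)
    {t : ℝ} (ht : 0 ≤ t) :
    t • x ∈ edom f ∧ f (t • x) = ((t * (f x).toReal : ℝ) : EReal) := by
  have h := hfs.2.2 t ht x hx
  have h2 : f (t • x) = ((t * (f x).toReal : ℝ) : EReal) := by
    rw [h, freal hf hx]; exact_mod_cast rfl
  refine ⟨?_, h2⟩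
  show f (t • x) < ⊤
  rw [h2]; exact EReal.coe_lt_top _

lemma fconj_nonneg {f : X → EReal} (h0 : f 0 = 0) (p : WeakDual ℝ X) : 0 ≤ fconj f p := by
  have := le_iSup (fun x : X => (p x : EReal) - f x) 0
  simpa [fconj, h0, map_zero] using this

lemma esub_nonpos {a : ℝ} {b : EReal} (h : (a : EReal) ≤ b) : (a : EReal) - b ≤ 0 := by
  induction b with
  | bot => simp at h
  | coe b => rw [← EReal.coe_sub]; exact_mod_cast (by exact_mod_cast h : a ≤ b) |> sub_nonpos.2
  | top => rw [EReal.sub_top]; exact bot_le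

lemma fconj_of_mem {f : X → EReal} (h0 : f 0 = 0) {p : WeakDual ℝ X} (hp : p ∈ sset f) :
    fconj f p = 0 :=
  le_antisymm (iSup_le fun x => esub_nonpos (hp x)) (fconj_nonneg h0 p)

lemma fconj_of_not_mem {f : X → EReal} (hf : EProper f) (hfs : ESublinear f) {p : WeakDual ℝ X}
    (hp : p ∉ sset f) : fconj f p = ⊤ := by
  obtain ⟨x, hx⟩ : ∃ x, ¬ (p x : EReal) ≤ f x := by simpa [sset] using hp
  have hlt : f x < (p x : EReal) := not_le.1 hx
  have hxd : x ∈ edom f := lt_trans hlt (EReal.coe_lt_top _)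
  set c := (f x).toReal with hcdef
  have hc : f x = (c : EReal) := freal hf hxd
  have hcp : c < p x := by rw [hc] at hlt; exact_mod_cast hlt
  rw [fconj, iSup_eq_top]
  intro b hb
  induction b with
  | bot =>
      refine ⟨x, ?_⟩
      rw [hc, ← EReal.coe_sub]
      exact bot_lt_iff_ne_bot.2 (EReal.coe_ne_bot _)
  | coe r =>
      have hd : 0 < p x - c := sub_pos.2 hcp
      obtain ⟨t, ht0, htr⟩ : ∃ t : ℝ, 0 ≤ t ∧ r < t * (p x - c) := by
        refine ⟨(max r 0 + 1) / (p x - c), le_of_lt (div_pos (by positivity) hd), ?_⟩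
        rw [div_mul_cancel₀ _ (ne_of_gt hd)]
        calc r ≤ max r 0 := le_max_left _ _
        _ < max r 0 + 1 := lt_add_one _
      refine ⟨t • x, ?_⟩
      have h2 := (edom_smul hf hfs hxd ht0).2
      rw [h2, map_smul, smul_eq_mul, ← EReal.coe_sub]
      exact_mod_cast (by ring_nf; linarith [htr] : r < t * p x - t * c)
  | top => exact absurd hb (lt_irrefl _)
lemma sset_closed (f : X → EReal) : IsClosed (sset f) := by
  have h : sset f = ⋂ x : X, {p : WeakDual ℝ X | (p x : EReal) ≤ f x} := by
    ext p; simp [sset, Set.mem_iInter]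
  rw [h]
  refine isClosed_iInter fun x => ?_
  exact isClosed_le (continuous_coe_real_ereal.comp (WeakDual.eval_continuous x)) continuous_const

lemma sset_convex (f : X → EReal) : Convex ℝ (sset f) := by
  intro p hp q hq a b ha hb hab x
  have hp' := hp x
  have hq' := hq x
  have hev : ((a • p + b • q : WeakDual ℝ X)) x = a * p x + b * q x := rfl
  show (((a • p + b • q : WeakDual ℝ X)) x : EReal) ≤ f x
  rw [hev]
  by_cases hfx : f x = ⊤
  · rw [hfx]; exact le_top
  · have hbx : f x ≠ ⊥ := fun hb => by rw [hb] at hp'; simp at hp'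
    set c := (f x).toReal with hcdef
    have hc : f x = (c : EReal) := (EReal.coe_toReal hfx hbx).symm
    rw [hc] at hp' hq' ⊢
    have h1 : p x ≤ c := by exact_mod_cast hp'
    have h2 : q x ≤ c := by exact_mod_cast hq'
    have h3 : a * p x + b * q x ≤ c := by
      calc a * p x + b * q x ≤ a * c + b * c := by gcongr
      _ = c := by rw [← add_mul, hab, one_mul]
    exact_mod_cast h3

lemma epiConj_eq {f : X → EReal} (hf : EProper f) (hfs : ESublinear f) :
    epiConj f = sset f ×ˢ Set.Ici (0 : ℝ) := by
  ext q
  simp only [epiConj, Set.mem_setOf_eq, Set.mem_prod, Set.mem_Ici]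
  constructor
  · intro h
    by_cases hq : q.1 ∈ sset f
    · refine ⟨hq, ?_⟩
      have h0 : (0 : EReal) ≤ (q.2 : EReal) := le_trans (fconj_nonneg hfs.1 q.1) h
      exact_mod_cast h0
    · rw [fconj_of_not_mem hf hfs hq] at h
      exact absurd (top_le_iff.1 h) (EReal.coe_ne_top _)
  · rintro ⟨h1, h2⟩
    rw [fconj_of_mem hfs.1 h1]
    exact_mod_cast h2

lemma sum_proper {f g : X → EReal} (hf : EProper f) (hg : EProper g)
    (hfs : ESublinear f) (hgs : ESublinear g) : EProper (fun x => f x + g x) := by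
  constructor
  · intro x
    simp [EReal.add_eq_bot_iff, hf.1 x, hg.1 x]
  · exact ⟨0, by show f 0 + g 0 ≠ ⊤; rw [hfs.1, hgs.1]; simp⟩

lemma edom_sum {f g : X → EReal} (hf : EProper f) (hg : EProper g) {x : X} :
    x ∈ edom (fun x => f x + g x) ↔ x ∈ edom f ∧ x ∈ edom g := by
  constructor
  · intro h
    by_contra hc
    push_neg at hc
    have : f x + g x = ⊤ := by
      rcases (not_and_or.1 fun hh : x ∈ edom f ∧ x ∈ edom g => hc hh.1 hh.2) with h1 | h1
      · have : f x = ⊤ := by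
          by_contra h2; exact h1 (lt_top_iff_ne_top.2 h2)
        rw [this]
        exact EReal.top_add_of_ne_bot (hg.1 x)
      · have hgx : g x = ⊤ := by
          by_contra h2; exact h1 (lt_top_iff_ne_top.2 h2)
        rw [hgx]
        exact EReal.add_top_of_ne_bot (hf.1 x)
    exact absurd this (ne_of_lt h)
  · rintro ⟨h1, h2⟩
    exact EReal.add_lt_top (ne_of_lt h1) (ne_of_lt h2)

lemma sum_sublinear {f g : X → EReal} (hf : EProper f) (hg : EProper g)
    (hfs : ESublinear f) (hgs : ESublinear g) : ESublinear (fun x => f x + g x) := by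
  refine ⟨by show f 0 + g 0 = 0; rw [hfs.1, hgs.1]; simp, ?_, ?_⟩
  · intro x hx y hy
    rw [edom_sum hf hg] at hx hy
    show f (x + y) + g (x + y) ≤ (f x + g x) + (f y + g y)
    calc f (x + y) + g (x + y) ≤ (f x + f y) + (g x + g y) :=
          add_le_add (hfs.2.1 x hx.1 y hy.1) (hgs.2.1 x hx.2 y hy.2)
    _ = (f x + g x) + (f y + g y) := add_add_add_comm _ _ _ _
  · intro t ht x hx
    rw [edom_sum hf hg] at hx
    show f (t • x) + g (t • x) = (t : EReal) * (f x + g x)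
    obtain ⟨_, h1⟩ := edom_smul hf hfs hx.1 ht
    obtain ⟨_, h2⟩ := edom_smul hg hgs hx.2 ht
    rw [h1, h2, freal hf hx.1, freal hg hx.2, ← EReal.coe_add, ← EReal.coe_add,
      ← EReal.coe_mul]
    norm_cast
    simp only [EReal.toReal_coe]
    ring

lemma sum_lsc {f g : X → EReal} (hf : EProper f) (hg : EProper g)
    (hfl : LowerSemicontinuous f) (hgl : LowerSemicontinuous g) :
    LowerSemicontinuous (fun x => f x + g x) := by
  refine hfl.add' hgl fun x => ?_
  exact EReal.continuousAt_add (Or.inr (hg.1 x)) (Or.inl (hf.1 x))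
lemma exists_sep {f : X → EReal} (hf : EProper f) (hfl : LowerSemicontinuous f)
    (hfs : ESublinear f) {x : X} {r : ℝ} (hr : (r : EReal) < f x) :
    ∃ (L : X →L[ℝ] ℝ) (β u : ℝ), 0 ≤ β ∧ u < 0 ∧ L x + β * r < u ∧
      ∀ z ∈ edom f, u < L z + β * (f z).toReal := by
  set Epi : Set (X × ℝ) := {q | f q.1 ≤ (q.2 : EReal)} with hEpi
  have hclosed : IsClosed Epi := by
    have h1 : IsClosed {p : X × EReal | f p.1 ≤ p.2} := hfl.isClosed_epigraph
    have h2 : Continuous fun q : X × ℝ => ((q.1, (q.2 : EReal)) : X × EReal) :=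
      continuous_fst.prodMk (continuous_coe_real_ereal.comp continuous_snd)
    exact h1.preimage h2
  have hmem : ∀ z ∈ edom f, ∀ a : ℝ, (f z).toReal ≤ a → (z, a) ∈ Epi := by
    intro z hz a ha
    show f z ≤ (a : EReal)
    rw [freal hf hz]
    exact_mod_cast ha
  have hconv : Convex ℝ Epi := by
    rintro ⟨x1, a1⟩ h1 ⟨x2, a2⟩ h2 a b ha hb hab
    replace h1 : f x1 ≤ (a1 : EReal) := h1
    replace h2 : f x2 ≤ (a2 : EReal) := h2
    have hx1 : x1 ∈ edom f := lt_of_le_of_lt h1 (EReal.coe_lt_top _)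
    have hx2 : x2 ∈ edom f := lt_of_le_of_lt h2 (EReal.coe_lt_top _)
    have hc1 : (f x1).toReal ≤ a1 := by
      rw [freal hf hx1] at h1; exact_mod_cast h1
    have hc2 : (f x2).toReal ≤ a2 := by
      rw [freal hf hx2] at h2; exact_mod_cast h2
    show f (a • x1 + b • x2) ≤ ((a * a1 + b * a2 : ℝ) : EReal)
    obtain ⟨hd1, he1⟩ := edom_smul hf hfs hx1 ha
    obtain ⟨hd2, he2⟩ := edom_smul hf hfs hx2 hb
    calc f (a • x1 + b • x2) ≤ f (a • x1) + f (b • x2) := hfs.2.1 _ hd1 _ hd2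
    _ = ((a * (f x1).toReal + b * (f x2).toReal : ℝ) : EReal) := by
        rw [he1, he2]; exact_mod_cast rfl
    _ ≤ ((a * a1 + b * a2 : ℝ) : EReal) := by
        apply EReal.coe_le_coe_iff.2
        gcongr
  have hnot : (x, r) ∉ Epi := by
    intro h
    exact absurd (lt_of_lt_of_le hr h) (lt_irrefl _)
  obtain ⟨φ, u, hφx, hφ⟩ := geometric_hahn_banach_point_closed hconv hclosed hnot
  set L : X →L[ℝ] ℝ := φ.comp (ContinuousLinearMap.inl ℝ X ℝ) with hL
  set β : ℝ := φ (0, 1) with hβ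
  have hdec : ∀ (z : X) (t : ℝ), φ (z, t) = L z + β * t := by
    intro z t
    have h1 : (z, t) = ((z, 0) : X × ℝ) + t • ((0 : X), (1 : ℝ)) := by
      simp [Prod.ext_iff]
    rw [h1, map_add, map_smul]
    simp only [smul_eq_mul, hL, hβ]
    rw [mul_comm]
    rfl
  have hzero : ((0 : X), (0 : ℝ)) ∈ Epi := by
    show f 0 ≤ ((0 : ℝ) : EReal)
    rw [hfs.1]; exact le_refl _
  have hu0 : u < 0 := by
    have := hφ _ hzero
    rw [hdec] at this
    simpa using this
  have hβ0 : 0 ≤ β := by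
    by_contra hneg
    push_neg at hneg
    obtain ⟨n, hn⟩ := exists_nat_gt (u / β)
    have hmem' : ((0 : X), (n : ℝ)) ∈ Epi := by
      show f 0 ≤ ((n : ℝ) : EReal)
      rw [hfs.1]; exact_mod_cast Nat.cast_nonneg n
    have h2 := hφ _ hmem'
    rw [hdec] at h2
    simp only [map_zero, zero_add] at h2
    have : β * (n : ℝ) < β * (u / β) := by
      apply (mul_lt_mul_left_of_neg hneg).2 hn
    rw [mul_div_cancel₀ _ (ne_of_lt hneg)] at this
    exact absurd (lt_trans h2 this) (lt_irrefl _)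
  refine ⟨L, β, u, hβ0, hu0, ?_, ?_⟩
  · have := hφx
    rw [hdec] at this
    exact this
  · intro z hz
    have := hφ _ (hmem z hz _ (le_refl _))
    rw [hdec] at this
    exact this

lemma minorant_of_pos {f : X → EReal} (hf : EProper f) (hfs : ESublinear f)
    {L : X →L[ℝ] ℝ} {β u : ℝ} (hβ : 0 < β)
    (hu : ∀ z ∈ edom f, u < L z + β * (f z).toReal) :
    ∀ z : X, (((-β⁻¹ • L : X →L[ℝ] ℝ)) z : EReal) ≤ f z := by
  intro z
  by_cases hz : z ∈ edom f
  · set c := (f z).toReal with hc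
    have key : 0 ≤ L z + β * c := by
      by_contra hneg
      push_neg at hneg
      set δ := -(L z + β * c) with hδ
      have hδpos : 0 < δ := by simp [hδ]; linarith
      set t := max 1 (-u / δ + 1) with ht
      have ht1 : (1 : ℝ) ≤ t := le_max_left _ _
      have ht0 : (0 : ℝ) ≤ t := by linarith
      have htgt : -u / δ < t := lt_of_lt_of_le (lt_add_one _) (le_max_right _ _)
      obtain ⟨hdz, hez⟩ := edom_smul hf hfs hz ht0
      have h2 := hu _ hdz
      rw [hez] at h2
      simp only [EReal.toReal_coe, map_smul, smul_eq_mul] at h2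
      -- h2 : u < t * L z + β * (t * c)
      have h3 : t * L z + β * (t * c) = -(t * δ) := by rw [hδ]; ring
      rw [h3] at h2
      have h4 : -u < t * δ := by
        calc -u = (-u / δ) * δ := by field_simp
        _ < t * δ := by apply mul_lt_mul_of_pos_right htgt hδpos
      linarith
    have hres : -β⁻¹ * L z ≤ c := by
      have h6 : β⁻¹ * (-L z) ≤ β⁻¹ * (β * c) :=
        mul_le_mul_of_nonneg_left (by linarith) (le_of_lt (inv_pos.2 hβ))
      rw [← mul_assoc, inv_mul_cancel₀ (ne_of_gt hβ), one_mul] at h6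
      linarith
    have happ : ((-β⁻¹ • L : X →L[ℝ] ℝ)) z = -β⁻¹ * L z := rfl
    rw [happ, freal hf hz]
    exact_mod_cast hres
  · have : f z = ⊤ := by
      by_contra h2
      exact hz (lt_top_iff_ne_top.2 h2)
    rw [this]
    exact le_top
lemma sset_nonempty {f : X → EReal} (hf : EProper f) (hfl : LowerSemicontinuous f)
    (hfs : ESublinear f) : (sset f).Nonempty := by
  have h0 : ((-1 : ℝ) : EReal) < f 0 := by rw [hfs.1]; exact_mod_cast (by norm_num : (-1:ℝ) < 0)
  obtain ⟨L, β, u, hβ0, hu0, hxr, hud⟩ := exists_sep hf hfl hfs h0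
  have hβ : 0 < β := by
    rcases lt_or_eq_of_le hβ0 with h | h
    · exact h
    · exfalso
      rw [← h] at hxr
      simp at hxr
      linarith
  exact ⟨(-β⁻¹ • L : X →L[ℝ] ℝ), minorant_of_pos hf hfs hβ hud⟩

lemma sset_dense {f : X → EReal} (hf : EProper f) (hfl : LowerSemicontinuous f)
    (hfs : ESublinear f) {x : X} {r : ℝ} (hr : (r : EReal) < f x) :
    ∃ p ∈ sset f, r < p x := by
  obtain ⟨L, β, u, hβ0, hu0, hxr, hud⟩ := exists_sep hf hfl hfs hr
  rcases lt_or_eq_of_le hβ0 with hβ | hβ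
  · refine ⟨(-β⁻¹ • L : X →L[ℝ] ℝ), minorant_of_pos hf hfs hβ hud, ?_⟩
    have happ : ((-β⁻¹ • L : X →L[ℝ] ℝ)) x = -β⁻¹ * L x := rfl
    show r < ((-β⁻¹ • L : X →L[ℝ] ℝ)) x
    rw [happ]
    have h1 : L x < u - β * r := by linarith
    have h2 : β⁻¹ * (u - β * r) ≤ β⁻¹ * u - ((β⁻¹ * β) * r) := by
      rw [mul_sub, mul_assoc]
    have h3 : -β⁻¹ * L x > -(β⁻¹ * u - r) := by
      have := mul_lt_mul_of_pos_left h1 (inv_pos.2 hβ)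
      rw [mul_sub, ← mul_assoc, inv_mul_cancel₀ (ne_of_gt hβ), one_mul] at this
      nlinarith
    have h4 : β⁻¹ * u < 0 := mul_neg_of_pos_of_neg (inv_pos.2 hβ) hu0
    linarith
  · -- β = 0
    have hLx : L x < u := by rw [← hβ] at hxr; simpa using hxr
    have hL0 : ∀ z ∈ edom f, 0 ≤ L z := by
      intro z hz
      by_contra hneg
      push_neg at hneg
      set t := max 1 (u / L z + 1) with ht
      have ht1 : (1 : ℝ) ≤ t := le_max_left _ _
      have ht0 : (0 : ℝ) ≤ t := by linarith
      have htgt : u / L z < t := lt_of_lt_of_le (lt_add_one _) (le_max_right _ _)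
      obtain ⟨hdz, hez⟩ := edom_smul hf hfs hz ht0
      have h2 := hud _ hdz
      rw [← hβ] at h2
      simp only [map_smul, smul_eq_mul, zero_mul, add_zero] at h2
      -- h2 : u < t * L z
      have h3 : t * L z < u := by
        have := (div_lt_iff_of_neg hneg).1 htgt
        linarith [this]
      linarith
    obtain ⟨p₀, hp₀⟩ := sset_nonempty hf hfl hfs
    have hLxneg : -L x > -u := by linarith
    set s := max 0 ((r - p₀ x + 1) / (-L x)) with hs
    have hs0 : (0 : ℝ) ≤ s := le_max_left _ _
    have hsgt : (r - p₀ x + 1) / (-L x) ≤ s := le_max_right _ _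
    set p : X →L[ℝ] ℝ := (show X →L[ℝ] ℝ from p₀) + s • (-L) with hp
    refine ⟨p, ?_, ?_⟩
    · intro z
      have happ : p z = p₀ z - s * L z := by
        simp [hp, sub_eq_add_neg]; rfl
      by_cases hz : z ∈ edom f
      · have h1 : (p₀ z : EReal) ≤ f z := hp₀ z
        rw [freal hf hz] at h1 ⊢
        have h2 : p₀ z ≤ (f z).toReal := by exact_mod_cast h1
        have h3 : p z ≤ (f z).toReal := by
          rw [happ]
          have := mul_nonneg hs0 (hL0 z hz)
          linarith
        exact_mod_cast h3
      · have : f z = ⊤ := by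
          by_contra h2
          exact hz (lt_top_iff_ne_top.2 h2)
        rw [this]
        exact le_top
    · show r < p x
      have happ : p x = p₀ x + s * (-L x) := by
        simp [hp]; rfl
      rw [happ]
      have hLxpos : 0 < -L x := by linarith
      have h1 : r - p₀ x + 1 ≤ s * (-L x) := by
        have := mul_le_mul_of_nonneg_right hsgt (le_of_lt hLxpos)
        rwa [div_mul_cancel₀ _ (ne_of_gt hLxpos)] at this
      linarith
lemma mem_closure_of_finite_approx {S : Set (WeakDual ℝ X)} {p : WeakDual ℝ X}
    (h : ∀ I : Finset X, ∀ ε : ℝ, 0 < ε → ∃ q ∈ S, ∀ x ∈ I, |q x - p x| < ε) :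
    p ∈ closure S := by
  have hemb := WeakBilin.isEmbedding (B := topDualPairing ℝ X)
    ContinuousLinearMap.coe_injective
  set ι : WeakDual ℝ X → (X → ℝ) := fun q x => topDualPairing ℝ X q x with hι
  have hcl : closure S = ι ⁻¹' closure (ι '' S) :=
    hemb.toIsInducing.closure_eq_preimage_closure_image S
  rw [hcl]
  show ι p ∈ closure (ι '' S)
  rw [mem_closure_iff]
  intro V hVopen hVmem
  obtain ⟨I, u, hu, hsub⟩ := isOpen_pi_iff.1 hVopen _ hVmem
  have hex : ∀ x ∈ I, ∃ ε : ℝ, 0 < ε ∧ Metric.ball (ι p x) ε ⊆ u x := fun x hx =>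
    Metric.isOpen_iff.1 (hu x hx).1 _ (hu x hx).2
  choose! ε hε using hex
  by_cases hI : I.Nonempty
  · set δ := I.inf' hI ε with hδ
    have hδpos : 0 < δ := by
      rw [hδ, Finset.lt_inf'_iff]
      exact fun x hx => (hε x hx).1
    obtain ⟨q, hqS, hq⟩ := h I δ hδpos
    refine ⟨ι q, ?_, Set.mem_image_of_mem _ hqS⟩
    apply hsub
    intro x hx
    apply (hε x hx).2
    rw [Metric.mem_ball, Real.dist_eq]
    calc |ι q x - ι p x| = |q x - p x| := rfl
    _ < δ := hq x hx
    _ ≤ ε x := Finset.inf'_le _ hx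
  · obtain ⟨q, hqS, -⟩ := h I 1 one_pos
    refine ⟨ι q, ?_, Set.mem_image_of_mem _ hqS⟩
    apply hsub
    intro x hx
    exact absurd ⟨x, hx⟩ hI

lemma split_lt {a b : EReal} (ha : a ≠ ⊥) (hb : b ≠ ⊥) {u : ℝ} (h : (u : EReal) < a + b) :
    ∃ r1 r2 : ℝ, (r1 : EReal) < a ∧ (r2 : EReal) < b ∧ u ≤ r1 + r2 := by
  by_cases hat : a = ⊤
  · by_cases hbt : b = ⊤
    · exact ⟨u, 0, by simp [hat], by simp [hbt], by simp⟩
    · have hbr : b = ((b.toReal : ℝ) : EReal) := (EReal.coe_toReal hbt hb).symm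
      refine ⟨u - (b.toReal - 1), b.toReal - 1, by rw [hat]; exact EReal.coe_lt_top _, ?_,
        by linarith⟩
      rw [hbr]
      exact_mod_cast sub_one_lt _
  · by_cases hbt : b = ⊤
    · have har : a = ((a.toReal : ℝ) : EReal) := (EReal.coe_toReal hat ha).symm
      refine ⟨a.toReal - 1, u - (a.toReal - 1), ?_, by rw [hbt]; exact EReal.coe_lt_top _,
        by linarith⟩
      rw [har]
      exact_mod_cast sub_one_lt _
    · have har : a = ((a.toReal : ℝ) : EReal) := (EReal.coe_toReal hat ha).symm
      have hbr : b = ((b.toReal : ℝ) : EReal) := (EReal.coe_toReal hbt hb).symm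
      set a' := a.toReal
      set b' := b.toReal
      have hu : u < a' + b' := by
        rw [har, hbr, ← EReal.coe_add] at h
        exact_mod_cast h
      set η := (a' + b' - u) / 3 with hη
      have hηpos : 0 < η := by rw [hη]; linarith
      refine ⟨a' - η, b' - η, ?_, ?_, by linarith⟩
      · rw [har]; exact_mod_cast (by linarith : a' - η < a')
      · rw [hbr]; exact_mod_cast (by linarith : b' - η < b')

lemma subset_closure_add {f g : X → EReal} (hf : EProper f) (hg : EProper g)
    (hfl : LowerSemicontinuous f) (hgl : LowerSemicontinuous g)
    (hfs : ESublinear f) (hgs : ESublinear g) :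
    sset (fun x => f x + g x) ⊆ closure (sset f + sset g) := by
  intro p hp
  apply mem_closure_of_finite_approx
  intro I ε hε
  by_contra hcon
  push_neg at hcon
  -- hcon : ∀ q ∈ sset f + sset g, ∃ x ∈ I, ε ≤ |q x - p x|
  classical
  set S := sset f + sset g with hS
  set T : WeakDual ℝ X → ({x // x ∈ I} → ℝ) := fun q i => q (i : X) with hT
  set Tl : WeakDual ℝ X →ₗ[ℝ] ({x // x ∈ I} → ℝ) :=
    { toFun := T, map_add' := fun _ _ => rfl, map_smul' := fun _ _ => rfl } with hTl
  set K := closure (T '' S) with hK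
  have hKconv : Convex ℝ K := by
    apply Convex.closure
    have hSconv : Convex ℝ S := (sset_convex f).add (sset_convex g)
    have : T '' S = Tl '' S := rfl
    rw [this]
    exact hSconv.linear_image Tl
  have hTpK : T p ∉ K := by
    intro hmem
    rw [Metric.mem_closure_iff] at hmem
    obtain ⟨b, hb, hd⟩ := hmem ε hε
    obtain ⟨q, hqS, rfl⟩ := hb
    obtain ⟨x, hxI, hxge⟩ := hcon q hqS
    have hlt := (dist_pi_lt_iff hε).1 (dist_comm (T p) (T q) ▸ hd) ⟨x, hxI⟩
    rw [Real.dist_eq] at hlt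
    have hlt' : |q x - p x| < ε := hlt
    have hxge' : ε ≤ |q x - p x| := by
      first
      | exact hxge
      | (rw [abs_sub_comm]; exact hxge)
      | (rw [abs_sub_comm] at hxge; exact hxge)
    linarith
  obtain ⟨φ, u, hφS, hφp⟩ := geometric_hahn_banach_closed_point hKconv isClosed_closure hTpK
  -- represent φ by a point of X
  set w : X := ∑ i : {x // x ∈ I}, φ (Pi.single i 1) • (i : X) with hw
  have hrep : ∀ q : WeakDual ℝ X, q w = φ (T q) := by
    intro q
    have hsingle : ∀ (i : {x // x ∈ I}) (c : ℝ),
        (Pi.single i c : {x // x ∈ I} → ℝ) = c • (Pi.single i (1 : ℝ) : {x // x ∈ I} → ℝ) := by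
      intro i c
      rw [← Pi.single_smul, smul_eq_mul, mul_one]
    have h1 : φ (T q) = ∑ i : {x // x ∈ I}, T q i * φ (Pi.single i 1) := by
      conv_lhs => rw [← Finset.univ_sum_single (T q)]
      rw [map_sum]
      refine Finset.sum_congr rfl fun i _ => ?_
      rw [hsingle i (T q i), map_smul, smul_eq_mul]
    rw [h1, hw, map_sum]
    apply Finset.sum_congr rfl
    intro i _
    rw [map_smul, smul_eq_mul, mul_comm]
  -- all q in S satisfy q w < u, while u < p w ≤ f w + g w
  have hqlt : ∀ q ∈ S, q w < u := by
    intro q hq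
    rw [hrep q]
    exact hφS _ (subset_closure (Set.mem_image_of_mem _ hq))
  have hpw : u < p w := by rw [hrep p]; exact hφp
  have hufg : (u : EReal) < f w + g w :=
    lt_of_lt_of_le (by exact_mod_cast hpw : (u : EReal) < (p w : EReal)) (hp w)
  obtain ⟨r1, r2, hr1, hr2, hr12⟩ := split_lt (hf.1 w) (hg.1 w) hufg
  obtain ⟨q1, hq1, hq1w⟩ := sset_dense hf hfl hfs hr1
  obtain ⟨q2, hq2, hq2w⟩ := sset_dense hg hgl hgs hr2
  have hsum : q1 + q2 ∈ S := Set.add_mem_add hq1 hq2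
  have : u ≤ r1 + r2 := hr12
  have hval : (q1 + q2) w = q1 w + q2 w := rfl
  have := hqlt _ hsum
  rw [hval] at this
  linarith
lemma subdiff_of_top {f : X → EReal} {x : X} (h : f x = ⊤) : subdiff f x = ∅ := by
  ext p
  simp [subdiff, epsSubdiff, h]

lemma subdiff_eq {f : X → EReal} (hf : EProper f) (hfs : ESublinear f) {x : X}
    (hx : x ∈ edom f) :
    subdiff f x = {p : WeakDual ℝ X | p ∈ sset f ∧ (p x : EReal) = f x} := by
  have hc : f x = ((f x).toReal : EReal) := freal hf hx
  set c := (f x).toReal with hcdef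
  ext p
  simp only [subdiff, epsSubdiff, Set.mem_setOf_eq]
  constructor
  · rintro ⟨hne, -, h⟩
    have h' : ∀ y : X, (p (y - x) : EReal) + f x ≤ f y := by
      intro y
      have := h y
      rwa [EReal.coe_zero, add_zero] at this
    have h0 := h' 0
    rw [hfs.1, hc, zero_sub, map_neg, ← EReal.coe_add] at h0
    have h0' : -p x + c ≤ 0 := by exact_mod_cast h0
    have h2x : f (x + x) = ((2 * c : ℝ) : EReal) := by
      have := (edom_smul hf hfs hx (by norm_num : (0:ℝ) ≤ 2)).2
      rwa [two_smul] at this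
    have h2 := h' (x + x)
    rw [h2x, hc, add_sub_cancel_left, ← EReal.coe_add] at h2
    have h2' : p x + c ≤ 2 * c := by exact_mod_cast h2
    have hpx : p x = c := le_antisymm (by linarith) (by linarith)
    constructor
    · intro y
      have := h' y
      rw [hc, map_sub, hpx, ← EReal.coe_add] at this
      have heq : p y - c + c = p y := by ring
      rwa [heq] at this
    · rw [hc, hpx]
  · rintro ⟨hp, hpx⟩
    refine ⟨by rw [hc]; exact EReal.coe_ne_top _, hf.1 x, fun y => ?_⟩
    have hpx' : p x = c := by
      rw [hc] at hpx; exact_mod_cast hpx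
    rw [EReal.coe_zero, add_zero, hc, map_sub, hpx', ← EReal.coe_add]
    have heq : p y - c + c = p y := by ring
    rw [heq]
    exact hp y

lemma sset_add_subset {f g : X → EReal} :
    sset f + sset g ⊆ sset (fun x => f x + g x) := by
  rintro p ⟨p1, hp1, p2, hp2, rfl⟩ x
  have : ((p1 + p2 : WeakDual ℝ X) x : EReal) = (p1 x : EReal) + (p2 x : EReal) := by
    exact_mod_cast rfl
  rw [this]
  exact add_le_add (hp1 x) (hp2 x)

lemma sumrule_iff {f g : X → EReal} (hf : EProper f) (hg : EProper g)
    (hfl : LowerSemicontinuous f) (hgl : LowerSemicontinuous g)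
    (hfs : ESublinear f) (hgs : ESublinear g) :
    (∀ x : X, subdiff (fun y => f y + g y) x = subdiff f x + subdiff g x) ↔
      sset (fun x => f x + g x) = sset f + sset g := by
  have hFp := sum_proper hf hg hfs hgs
  have hFs := sum_sublinear hf hg hfs hgs
  constructor
  · intro h
    have h0 := h 0
    have hd0 : (0 : X) ∈ edom (fun y => f y + g y) := zero_mem_edom hFs
    rw [subdiff_eq hFp hFs hd0, subdiff_eq hf hfs (zero_mem_edom hfs),
      subdiff_eq hg hgs (zero_mem_edom hgs)] at h0
    have e1 : {p : WeakDual ℝ X | p ∈ sset (fun y => f y + g y) ∧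
        (p 0 : EReal) = f 0 + g 0} = sset (fun y => f y + g y) := by
      ext p
      simp only [Set.mem_setOf_eq, map_zero, hfs.1, hgs.1]
      exact ⟨fun hh => hh.1, fun hh => ⟨hh, by simp⟩⟩
    have e2 : {p : WeakDual ℝ X | p ∈ sset f ∧ (p 0 : EReal) = f 0} = sset f := by
      ext p
      simp only [Set.mem_setOf_eq, map_zero, hfs.1]
      exact ⟨fun hh => hh.1, fun hh => ⟨hh, by simp⟩⟩
    have e3 : {p : WeakDual ℝ X | p ∈ sset g ∧ (p 0 : EReal) = g 0} = sset g := by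
      ext p
      simp only [Set.mem_setOf_eq, map_zero, hgs.1]
      exact ⟨fun hh => hh.1, fun hh => ⟨hh, by simp⟩⟩
    rw [e1, e2, e3] at h0
    exact h0
  · intro heq x
    by_cases hxd : x ∈ edom (fun y => f y + g y)
    · have hxf : x ∈ edom f := ((edom_sum hf hg).1 hxd).1
      have hxg : x ∈ edom g := ((edom_sum hf hg).1 hxd).2
      rw [subdiff_eq hFp hFs hxd, subdiff_eq hf hfs hxf, subdiff_eq hg hgs hxg]
      have hcf : f x = ((f x).toReal : EReal) := freal hf hxf
      have hcg : g x = ((g x).toReal : EReal) := freal hg hxg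
      set cf := (f x).toReal
      set cg := (g x).toReal
      ext p
      constructor
      · rintro ⟨hpS, hpx⟩
        have hpsum : p ∈ sset f + sset g := heq ▸ hpS
        obtain ⟨p1, hp1, p2, hp2, rfl⟩ := hpsum
        have hval : ((p1 + p2 : WeakDual ℝ X) x : EReal) = ((p1 x + p2 x : ℝ) : EReal) := by
          exact_mod_cast rfl
        have hsum : p1 x + p2 x = cf + cg := by
          rw [hval, hcf, hcg, ← EReal.coe_add] at hpx
          exact_mod_cast hpx
        have h1 : p1 x ≤ cf := by
          have := hp1 x; rw [hcf] at this; exact_mod_cast this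
        have h2 : p2 x ≤ cg := by
          have := hp2 x; rw [hcg] at this; exact_mod_cast this
        have h1' : p1 x = cf := by linarith
        have h2' : p2 x = cg := by linarith
        exact Set.add_mem_add ⟨hp1, by rw [hcf]; exact_mod_cast h1'⟩
          ⟨hp2, by rw [hcg]; exact_mod_cast h2'⟩
      · rintro ⟨p1, ⟨hp1, hp1x⟩, p2, ⟨hp2, hp2x⟩, rfl⟩
        refine ⟨heq ▸ Set.add_mem_add hp1 hp2, ?_⟩
        have hval : ((p1 + p2 : WeakDual ℝ X) x : EReal) = ((p1 x + p2 x : ℝ) : EReal) := by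
          exact_mod_cast rfl
        rw [hval, hcf, hcg] at *
        have h1 : p1 x = cf := by exact_mod_cast hp1x
        have h2 : p2 x = cg := by exact_mod_cast hp2x
        rw [h1, h2]
        exact_mod_cast rfl
    · have htop : f x + g x = ⊤ := by
        by_contra hne
        exact hxd (lt_top_iff_ne_top.2 hne)
      rw [subdiff_of_top (f := fun y => f y + g y) htop]
      by_cases hxf : x ∈ edom f
      · have : g x = ⊤ := by
          by_contra hne
          exact hxd ((edom_sum hf hg).2 ⟨hxf, lt_top_iff_ne_top.2 hne⟩)
        rw [subdiff_of_top this, Set.add_empty]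
      · have : f x = ⊤ := by
          by_contra hne
          exact hxf (lt_top_iff_ne_top.2 hne)
        rw [subdiff_of_top this, Set.empty_add]
lemma fconj_ne_bot {f : X → EReal} (h0 : f 0 = 0) (p : WeakDual ℝ X) : fconj f p ≠ ⊥ :=
  fun h => by simpa [h] using fconj_nonneg h0 p

lemma term_top {f g : X → EReal} (hf : EProper f) (hg : EProper g)
    (hfs : ESublinear f) (hgs : ESublinear g) {p : WeakDual ℝ X}
    (hp : p ∉ sset f + sset g) (q : WeakDual ℝ X) :
    fconj f q + fconj g (p - q) = ⊤ := by
  by_cases hq : q ∈ sset f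
  · have hq2 : p - q ∉ sset g := fun hmem => hp ⟨q, hq, p - q, hmem, show q + (p - q) = p by rw [add_comm, sub_add_cancel]⟩
    rw [fconj_of_not_mem hg hgs hq2]
    exact EReal.add_top_of_ne_bot (fconj_ne_bot hfs.1 q)
  · rw [fconj_of_not_mem hf hfs hq]
    exact EReal.top_add_of_ne_bot (fconj_ne_bot hgs.1 _)

lemma iInf_conv_of_mem {f g : X → EReal} (hfs : ESublinear f) (hgs : ESublinear g)
    {p : WeakDual ℝ X} (hp : p ∈ sset f + sset g) :
    (⨅ q : WeakDual ℝ X, fconj f q + fconj g (p - q)) = 0 := by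
  obtain ⟨q1, hq1, q2, hq2, rfl⟩ := hp
  apply le_antisymm
  · calc (⨅ q : WeakDual ℝ X, fconj f q + fconj g (q1 + q2 - q)) ≤
        fconj f q1 + fconj g (q1 + q2 - q1) := iInf_le _ q1
    _ = 0 := by
        rw [add_sub_cancel_left, fconj_of_mem hfs.1 hq1, fconj_of_mem hgs.1 hq2, add_zero]
  · exact le_iInf fun q => add_nonneg (fconj_nonneg hfs.1 q) (fconj_nonneg hgs.1 _)

lemma iInf_conv_of_not_mem {f g : X → EReal} (hf : EProper f) (hg : EProper g)
    (hfs : ESublinear f) (hgs : ESublinear g) {p : WeakDual ℝ X}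
    (hp : p ∉ sset f + sset g) :
    (⨅ q : WeakDual ℝ X, fconj f q + fconj g (p - q)) = ⊤ := by
  rw [iInf_eq_top]
  exact term_top hf hg hfs hgs hp

lemma exact_always {f g : X → EReal} (hf : EProper f) (hg : EProper g)
    (hfs : ESublinear f) (hgs : ESublinear g) (p : WeakDual ℝ X) :
    ∃ q : WeakDual ℝ X, (⨅ q' : WeakDual ℝ X, fconj f q' + fconj g (p - q')) =
      fconj f q + fconj g (p - q) := by
  by_cases hp : p ∈ sset f + sset g
  · obtain ⟨q1, hq1, q2, hq2, rfl⟩ := hp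
    refine ⟨q1, ?_⟩
    rw [iInf_conv_of_mem hfs hgs (Set.add_mem_add hq1 hq2), add_sub_cancel_left,
      fconj_of_mem hfs.1 hq1, fconj_of_mem hgs.1 hq2, add_zero]
  · exact ⟨0, by rw [iInf_conv_of_not_mem hf hg hfs hgs hp, term_top hf hg hfs hgs hp 0]⟩

end Aux

theorem stmt13 {X : Type*} [NormedAddCommGroup X] [NormedSpace ℝ X] [CompleteSpace X]
    (f g : X → EReal) (hf : EProper f) (hg : EProper g)
    (hfl : LowerSemicontinuous f) (hgl : LowerSemicontinuous g)
    (hfs : ESublinear f) (hgs : ESublinear g) :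
    (IsClosed (epiConj f + epiConj g) ↔
      ((∀ p : WeakDual ℝ X,
          fconj (fun x => f x + g x) p = ⨅ q : WeakDual ℝ X, fconj f q + fconj g (p - q)) ∧
       (∀ p : WeakDual ℝ X, ∃ q : WeakDual ℝ X,
          (⨅ q' : WeakDual ℝ X, fconj f q' + fconj g (p - q')) = fconj f q + fconj g (p - q)))) ∧
    (((∀ p : WeakDual ℝ X,
          fconj (fun x => f x + g x) p = ⨅ q : WeakDual ℝ X, fconj f q + fconj g (p - q)) ∧
       (∀ p : WeakDual ℝ X, ∃ q : WeakDual ℝ X,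
          (⨅ q' : WeakDual ℝ X, fconj f q' + fconj g (p - q')) = fconj f q + fconj g (p - q))) ↔
      (∀ x : X, subdiff (fun y => f y + g y) x = subdiff f x + subdiff g x)) := by
  have hFp := sum_proper hf hg hfs hgs
  have hFs := sum_sublinear hf hg hfs hgs
  have hB1 : (∀ p : WeakDual ℝ X, fconj (fun x => f x + g x) p =
      ⨅ q : WeakDual ℝ X, fconj f q + fconj g (p - q)) ↔
      sset (fun x => f x + g x) = sset f + sset g := by
    constructor
    · intro h
      apply Set.Subset.antisymm ?_ sset_add_subset
      intro p hp
      have h1 := h p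
      by_contra hpn
      rw [fconj_of_mem hFs.1 hp, iInf_conv_of_not_mem hf hg hfs hgs hpn] at h1
      simp at h1
    · intro heq p
      by_cases hp : p ∈ sset (fun x => f x + g x)
      · rw [iInf_conv_of_mem hfs hgs (heq ▸ hp), fconj_of_mem hFs.1 hp]
      · rw [iInf_conv_of_not_mem hf hg hfs hgs (heq ▸ hp), fconj_of_not_mem hFp hFs hp]
  have hprod : epiConj f + epiConj g = (sset f + sset g) ×ˢ Set.Ici (0 : ℝ) := by
    rw [epiConj_eq hf hfs, epiConj_eq hg hgs]
    ext q
    constructor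
    · rintro ⟨q1, hq1, q2, hq2, rfl⟩
      exact ⟨Set.add_mem_add hq1.1 hq2.1, show (0:ℝ) ≤ q1.2 + q2.2 from add_nonneg hq1.2 hq2.2⟩
    · rintro ⟨hq1, hq2⟩
      obtain ⟨p1, hp1, p2, hp2, hps⟩ := hq1
      refine ⟨(p1, q.2), ⟨hp1, hq2⟩, (p2, 0), ⟨hp2, Set.self_mem_Ici⟩, ?_⟩
      show ((p1, q.2) : WeakDual ℝ X × ℝ) + (p2, 0) = q
      have hps' : p1 + p2 = q.1 := hps
      have h1 : ((p1, q.2) : WeakDual ℝ X × ℝ) + (p2, 0) = (p1 + p2, q.2 + 0) := rfl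
      rw [h1, hps', add_zero]
  have hclosediff : IsClosed (epiConj f + epiConj g) ↔ IsClosed (sset f + sset g) := by
    rw [hprod]
    constructor
    · intro h
      have he : sset f + sset g =
          (fun q : WeakDual ℝ X => ((q, (0 : ℝ)) : WeakDual ℝ X × ℝ)) ⁻¹'
            ((sset f + sset g) ×ˢ Set.Ici (0 : ℝ)) := by
        ext q; simp
      rw [he]
      exact h.preimage (Continuous.prodMk continuous_id continuous_const)
    · intro h
      exact h.prod isClosed_Ici
  have hkey : IsClosed (sset f + sset g) ↔
      sset (fun x => f x + g x) = sset f + sset g := by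
    constructor
    · intro h
      apply Set.Subset.antisymm ?_ sset_add_subset
      intro p hp
      have := subset_closure_add hf hg hfl hgl hfs hgs hp
      rwa [h.closure_eq] at this
    · intro heq
      rw [← heq]
      exact sset_closed _
  constructor
  · rw [hclosediff, hkey]
    constructor
    · intro h
      exact ⟨hB1.2 h, fun p => exact_always hf hg hfs hgs p⟩
    · rintro ⟨h1, -⟩
      exact hB1.1 h1
  · constructor
    · rintro ⟨h1, -⟩
      exact (sumrule_iff hf hg hfl hgl hfs hgs).2 (hB1.1 h1)
    · intro h
      exact ⟨hB1.2 ((sumrule_iff hf hg hfl hgl hfs hgs).1 h),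
        fun p => exact_always hf hg hfs hgs p⟩
end
end
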